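/- arXiv:1902.03297 — 6 statements merged into one kernel-verified Lean document; each statement's English description precedes it below -/
import Mathlib

section
/- Let F be a decomposable family with junction tree T, and let p be the maximum likelihood distribution in the corresponding exponential model. Then the negative normalized log-likelihood of the data equals the sum over maximal itemsets X of the empirical entropy H(X), minus the sum over edges (X,Y) of the junction tree of the empirical entropy H(X∩Y). That is, −log P(D|M,r*)/|D| = Σ_{X ∈ max(F)} H(X) − Σ_{(X,Y) ∈ E(T)} H(X∩Y). -/
open scoped Classical

variable {A : Type*} [Fintype A] [DecidableEq A]

/-- A family of itemsets is downward closed if it is closed under taking subsets. -/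
def DownwardClosed (F : Finset (Finset A)) : Prop :=
  ∀ X ∈ F, ∀ Y ⊆ X, Y ∈ F

/-- The maximal itemsets of a family. -/
def maximalSets (F : Finset (Finset A)) : Finset (Finset A) :=
  F.filter fun X => ∀ Y ∈ F, X ⊆ Y → X = Y

/-- A junction tree for a family `F`: a tree on the maximal itemsets of `F` such that
for any two nodes sharing an item `a`, every node on the (unique) path between them
contains `a` (running intersection property). -/
def IsJunctionTree (F : Finset (Finset A))
    (G : SimpleGraph {X // X ∈ maximalSets F}) : Prop :=
  G.IsTree ∧
    ∀ (X Y : {X // X ∈ maximalSets F}) (a : A), a ∈ X.1 → a ∈ Y.1 →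
      ∀ (p : G.Walk X Y), p.IsPath → ∀ Z ∈ p.support, a ∈ Z.1

/-- A family is decomposable if it admits a junction tree. -/
def Decomposable (F : Finset (Finset A)) : Prop :=
  ∃ G : SimpleGraph {X // X ∈ maximalSets F}, IsJunctionTree F G

/-- The collection {X − S : X ∈ max(F), S ⊊ X}. -/
def baseFam (F : Finset (Finset A)) (S : Finset A) : Finset (Finset A) :=
  ((maximalSets F).filter fun X => S ⊂ X).image fun X => X \ S

/-- The union of the connected component of `U` in the intersection graph on `baseFam F S`. -/
noncomputable def component (F : Finset (Finset A)) (S U : Finset A) : Finset A :=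
  ((baseFam F S).filter fun V =>
      Relation.ReflTransGen
        (fun P Q => P ∈ baseFam F S ∧ Q ∈ baseFam F S ∧ (P ∩ Q).Nonempty) U V).sup id

/-- The reduced family R(F;S): obtained from {X − S : X ∈ max(F), S ⊊ X} by repeatedly
replacing intersecting members by their union until all members are pairwise disjoint;
equivalently, the unions of the connected components of the intersection graph. -/
noncomputable def reducedFamily (F : Finset (Finset A)) (S : Finset A) : Set (Finset A) :=
  {Z | ∃ U ∈ baseFam F S, Z = component F S U}

variable {K : ℕ}

/-- The frequency of itemset `X` under distribution `p`: the probability that all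
items of `X` take value `true`. -/
noncomputable def freq (p : (Fin K → Bool) → ℝ) (X : Finset (Fin K)) : ℝ :=
  ∑ t ∈ Finset.univ.filter (fun t : Fin K → Bool => ∀ i ∈ X, t i = true), p t

/-- `p` is a probability distribution on `{0,1}^K`. -/
def IsDist (p : (Fin K → Bool) → ℝ) : Prop :=
  (∀ t, 0 ≤ p t) ∧ ∑ t, p t = 1

/-- The empirical distribution of a dataset `D`. -/
noncomputable def empirical (D : Multiset (Fin K → Bool)) : (Fin K → Bool) → ℝ :=
  fun t => (D.count t : ℝ) / (Multiset.card D : ℝ)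

/-- The likelihood of a dataset `D` under distribution `p`. -/
noncomputable def likelihood (p : (Fin K → Bool) → ℝ) (D : Multiset (Fin K → Bool)) : ℝ :=
  (D.map p).prod

/-- The (Shannon) entropy of a distribution. -/
noncomputable def entropyDist (p : (Fin K → Bool) → ℝ) : ℝ :=
  -∑ t, p t * Real.log (p t)

/-- Indicator `S_X(t)`: 1 if transaction `t` covers itemset `X`, else 0. -/
def ind (X : Finset (Fin K)) (t : Fin K → Bool) : ℝ :=
  if ∀ i ∈ X, t i = true then 1 else 0

/-- `p` has the exponential form associated with family `F`. -/
def ExpForm (F : Finset (Finset (Fin K))) (p : (Fin K → Bool) → ℝ) : Prop :=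
  ∃ r : Finset (Fin K) → ℝ, ∀ t, p t = Real.exp (∑ X ∈ F, r X * ind X t)

/-- The exponential model associated with `F`: distributions of exponential form
together with all their limits. -/
def ExpModel (F : Finset (Finset (Fin K))) : Set ((Fin K → Bool) → ℝ) :=
  closure {p | ExpForm F p}

/-- `p` matches the frequencies of `q` on every itemset of `F`. -/
def Matches (F : Finset (Finset (Fin K))) (p q : (Fin K → Bool) → ℝ) : Prop :=
  ∀ X ∈ F, freq p X = freq q X

/-- The marginal probability under `p` of observing the values of `t` on the
coordinates of `X`. -/
noncomputable def marg (p : (Fin K → Bool) → ℝ) (X : Finset (Fin K)) (t : Fin K → Bool) : ℝ :=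
  ∑ s ∈ Finset.univ.filter (fun s : Fin K → Bool => ∀ i ∈ X, s i = t i), p s

/-- The empirical entropy of an itemset `X` under distribution `q`. -/
noncomputable def entropyOf (q : (Fin K → Bool) → ℝ) (X : Finset (Fin K)) : ℝ :=
  -∑ u : {i // i ∈ X} → Bool,
      (marg q X fun i => if h : i ∈ X then u ⟨i, h⟩ else false) *
        Real.log (marg q X fun i => if h : i ∈ X then u ⟨i, h⟩ else false)

/-- Kullback–Leibler divergence. -/
noncomputable def KLdiv (p q : (Fin K → Bool) → ℝ) : ℝ :=
  ∑ t, p t * Real.log (p t / q t)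

noncomputable def extX (X : Finset (Fin K)) (u : {i // i ∈ X} → Bool) : Fin K → Bool :=
  fun i => if h : i ∈ X then u ⟨i, h⟩ else false

lemma marg_congr (q : (Fin K → Bool) → ℝ) (X : Finset (Fin K)) {t t' : Fin K → Bool}
    (h : ∀ i ∈ X, t i = t' i) : marg q X t = marg q X t' := by
  unfold marg
  congr 1
  apply Finset.filter_congr
  intro s _
  exact ⟨fun hs i hi => (hs i hi).trans (h i hi), fun hs i hi => (hs i hi).trans (h i hi).symm⟩

lemma marg_ge (q : (Fin K → Bool) → ℝ) (hq : ∀ t, 0 ≤ q t) (X : Finset (Fin K))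
    (t : Fin K → Bool) : q t ≤ marg q X t := by
  unfold marg
  exact Finset.single_le_sum (fun s _ => hq s) (by simp)

lemma group_sum (q : (Fin K → Bool) → ℝ) (X : Finset (Fin K)) (g : (Fin K → Bool) → ℝ)
    (hg : ∀ t t', (∀ i ∈ X, t i = t' i) → g t = g t') :
    ∑ t, q t * g t =
      ∑ u : {i // i ∈ X} → Bool, marg q X (extX X u) * g (extX X u) := by
  rw [← Finset.sum_fiberwise Finset.univ (fun t (i : {i // i ∈ X}) => t i.1)
      (fun t => q t * g t)]
  refine Finset.sum_congr rfl fun u _ => ?_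
  have hmem : ∀ t : Fin K → Bool,
      ((fun i : {i // i ∈ X} => t i.1) = u) ↔ (∀ i ∈ X, t i = extX X u i) := by
    intro t
    constructor
    · intro h i hi
      simp [extX, hi, ← h]
    · intro h
      funext i
      have := h i.1 i.2
      simpa [extX, i.2] using this
  have hfilter : Finset.univ.filter (fun t : Fin K → Bool => (fun i : {i // i ∈ X} => t i.1) = u)
      = Finset.univ.filter (fun t : Fin K → Bool => ∀ i ∈ X, t i = extX X u i) := by
    apply Finset.filter_congr
    intro t _
    exact hmem t
  rw [hfilter]
  have : ∀ t ∈ Finset.univ.filter (fun t : Fin K → Bool => ∀ i ∈ X, t i = extX X u i),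
      q t * g t = q t * g (extX X u) := by
    intro t ht
    rw [hg t (extX X u) (by simpa using (Finset.mem_filter.mp ht).2)]
  rw [Finset.sum_congr rfl this, ← Finset.sum_mul]
  rfl

lemma sum_mul_log_marg (q : (Fin K → Bool) → ℝ) (X : Finset (Fin K)) :
    ∑ t, q t * Real.log (marg q X t) = -entropyOf q X := by
  rw [group_sum q X _ (fun t t' h => by rw [marg_congr q X h])]
  unfold entropyOf extX
  rw [neg_neg]

lemma multiset_log_prod (s : Multiset ℝ) (h : ∀ x ∈ s, x ≠ 0) :
    Real.log s.prod = (s.map Real.log).sum := by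
  induction s using Multiset.induction_on with
  | empty => simp
  | cons a s ih =>
    have ha : a ≠ 0 := h a (Multiset.mem_cons_self a s)
    have hs : ∀ x ∈ s, x ≠ 0 := fun x hx => h x (Multiset.mem_cons_of_mem hx)
    have hprod : s.prod ≠ 0 := Multiset.prod_ne_zero fun h0 => hs 0 h0 rfl
    simp [Multiset.prod_cons, Real.log_mul ha hprod, ih hs]

/-- Theorem: for a decomposable family `F` with junction tree `G`, the maximum likelihood
distribution `p` (which factorizes over the junction tree and agrees with the empirical
distribution on the marginals of every itemset of `F`) satisfies
`−log P(D | M, r*) / |D| = Σ_{X ∈ max(F)} H(X) − Σ_{(X,Y) ∈ E(T)} H(X ∩ Y)`. -/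
theorem decomposable_max_loglikelihood (F : Finset (Finset (Fin K)))
    (hdc : DownwardClosed F)
    (G : SimpleGraph {X // X ∈ maximalSets F}) [Fintype G.edgeSet]
    (hG : IsJunctionTree F G)
    (D : Multiset (Fin K → Bool)) (hD : D ≠ 0)
    (p : (Fin K → Bool) → ℝ) (hp : IsDist p)
    (hfact : ∀ t, p t =
      (∏ X ∈ maximalSets F, marg p X t) /
        ∏ e ∈ G.edgeFinset,
          Sym2.lift ⟨fun X Y => marg p (X.1 ∩ Y.1) t,
            fun X Y => by simp [Finset.inter_comm]⟩ e)
    (hagree : ∀ X ∈ F, ∀ t, marg p X t = marg (empirical D) X t) :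
    -(Real.log (likelihood p D)) / (Multiset.card D : ℝ) =
      (∑ X ∈ maximalSets F, entropyOf (empirical D) X) -
        ∑ e ∈ G.edgeFinset,
          Sym2.lift ⟨fun X Y => entropyOf (empirical D) (X.1 ∩ Y.1),
            fun X Y => by simp [Finset.inter_comm]⟩ e := by

  classical
  set q := empirical D with hq
  have hN : (0:ℝ) < (Multiset.card D : ℝ) := by
    have : 0 < Multiset.card D := Multiset.card_pos.mpr hD
    exact_mod_cast this
  have hq0 : ∀ t, 0 ≤ q t := fun t => by
    unfold q
    unfold empirical
    positivity
  have hqpos : ∀ t ∈ D, 0 < q t := by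
    intro t ht
    unfold q
    unfold empirical
    have : 0 < D.count t := Multiset.count_pos.mpr ht
    positivity
  have maxsub : maximalSets F ⊆ F := Finset.filter_subset _ _
  have margpos : ∀ Z ∈ F, ∀ t, 0 < q t → 0 < marg p Z t := by
    intro Z hZ t hqt
    rw [hagree Z hZ]
    exact lt_of_lt_of_le hqt (marg_ge q hq0 Z t)
  have intermem : ∀ X Y : {X // X ∈ maximalSets F}, X.1 ∩ Y.1 ∈ F := by
    intro X Y
    exact hdc X.1 (maxsub X.2) _ (Finset.inter_subset_left)
  have liftpos : ∀ (e : Sym2 {X // X ∈ maximalSets F}) (t : Fin K → Bool), 0 < q t →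
      0 < Sym2.lift ⟨fun X Y => marg p (X.1 ∩ Y.1) t,
        fun X Y => by simp [Finset.inter_comm]⟩ e := by
    intro e t hqt
    induction e using Sym2.inductionOn with
    | hf X Y => exact margpos _ (intermem X Y) t hqt
  have ppos : ∀ t, 0 < q t → 0 < p t := by
    intro t hqt
    rw [hfact t]
    exact div_pos (Finset.prod_pos fun X hX => margpos X (maxsub hX) t hqt)
      (Finset.prod_pos fun e _ => liftpos e t hqt)
  have logp : ∀ t, 0 < q t → Real.log (p t) =
      (∑ X ∈ maximalSets F, Real.log (marg p X t)) -
        ∑ e ∈ G.edgeFinset, Real.log (Sym2.lift ⟨fun X Y => marg p (X.1 ∩ Y.1) t,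
          fun X Y => by simp [Finset.inter_comm]⟩ e) := by
    intro t hqt
    rw [hfact t, Real.log_div (ne_of_gt (Finset.prod_pos fun X hX => margpos X (maxsub hX) t hqt))
      (ne_of_gt (Finset.prod_pos fun e _ => liftpos e t hqt)),
      Real.log_prod (fun X hX => ne_of_gt (margpos X (maxsub hX) t hqt)),
      Real.log_prod (fun e _ => ne_of_gt (liftpos e t hqt))]
  -- Step A: reduce to sum over all transactions
  have stepA : -(Real.log (likelihood p D)) / (Multiset.card D : ℝ) =
      -∑ t, q t * Real.log (p t) := by
    have hlog : Real.log (likelihood p D) = (D.map (fun t => Real.log (p t))).sum := by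
      unfold likelihood
      rw [multiset_log_prod _ (by
        intro x hx
        obtain ⟨t, ht, rfl⟩ := Multiset.mem_map.mp hx
        exact ne_of_gt (ppos t (hqpos t ht)))]
      rw [Multiset.map_map]
      rfl
    have hsum : (D.map (fun t => Real.log (p t))).sum =
        ∑ t, (D.count t : ℝ) * Real.log (p t) := by
      rw [Finset.sum_multiset_map_count]
      rw [Finset.sum_subset (Finset.subset_univ D.toFinset)]
      · simp [nsmul_eq_mul]
      · intro t _ ht
        simp [Multiset.count_eq_zero_of_notMem (fun h => ht (Multiset.mem_toFinset.mpr h))]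
    rw [hlog, hsum, neg_div]
    congr 1
    rw [Finset.sum_div]
    refine Finset.sum_congr rfl fun t _ => ?_
    unfold q
    unfold empirical
    ring
  rw [stepA]
  -- Step B: expand log p t pointwise
  have stepB : ∑ t, q t * Real.log (p t) =
      ∑ t, q t * ((∑ X ∈ maximalSets F, Real.log (marg p X t)) -
        ∑ e ∈ G.edgeFinset, Real.log (Sym2.lift ⟨fun X Y => marg p (X.1 ∩ Y.1) t,
          fun X Y => by simp [Finset.inter_comm]⟩ e)) := by
    refine Finset.sum_congr rfl fun t _ => ?_
    rcases eq_or_lt_of_le (hq0 t) with h | h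
    · rw [← h]; ring
    · rw [logp t h]
  rw [stepB]
  have expand : ∑ t, q t * ((∑ X ∈ maximalSets F, Real.log (marg p X t)) -
        ∑ e ∈ G.edgeFinset, Real.log (Sym2.lift ⟨fun X Y => marg p (X.1 ∩ Y.1) t,
          fun X Y => by simp [Finset.inter_comm]⟩ e)) =
      (∑ X ∈ maximalSets F, ∑ t, q t * Real.log (marg p X t)) -
        ∑ e ∈ G.edgeFinset, ∑ t, q t * Real.log (Sym2.lift ⟨fun X Y => marg p (X.1 ∩ Y.1) t,
          fun X Y => by simp [Finset.inter_comm]⟩ e) := by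
    rw [show (∑ X ∈ maximalSets F, ∑ t, q t * Real.log (marg p X t)) =
        ∑ t, ∑ X ∈ maximalSets F, q t * Real.log (marg p X t) from Finset.sum_comm,
      show (∑ e ∈ G.edgeFinset, ∑ t, q t * Real.log (Sym2.lift ⟨fun X Y => marg p (X.1 ∩ Y.1) t,
          fun X Y => by simp [Finset.inter_comm]⟩ e)) =
        ∑ t, ∑ e ∈ G.edgeFinset, q t * Real.log (Sym2.lift ⟨fun X Y => marg p (X.1 ∩ Y.1) t,
          fun X Y => by simp [Finset.inter_comm]⟩ e) from Finset.sum_comm,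
      ← Finset.sum_sub_distrib]
    refine Finset.sum_congr rfl fun t _ => ?_
    rw [mul_sub, Finset.mul_sum, Finset.mul_sum]
  rw [expand]
  have term1 : ∀ X ∈ maximalSets F, ∑ t, q t * Real.log (marg p X t) = -entropyOf q X := by
    intro X hX
    have : ∀ t, marg p X t = marg q X t := hagree X (maxsub hX)
    simp only [this]
    exact sum_mul_log_marg q X
  have term2 : ∀ e ∈ G.edgeFinset,
      ∑ t, q t * Real.log (Sym2.lift ⟨fun X Y => marg p (X.1 ∩ Y.1) t,
        fun X Y => by simp [Finset.inter_comm]⟩ e) =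
      -(Sym2.lift ⟨fun X Y => entropyOf q (X.1 ∩ Y.1),
        fun X Y => by simp [Finset.inter_comm]⟩ e) := by
    intro e _
    induction e using Sym2.inductionOn with
    | hf X Y =>
      simp only [Sym2.lift_mk]
      have : ∀ t, marg p (X.1 ∩ Y.1) t = marg q (X.1 ∩ Y.1) t := hagree _ (intermem X Y)
      simp only [this]
      exact sum_mul_log_marg q (X.1 ∩ Y.1)
  rw [Finset.sum_congr rfl term1, Finset.sum_congr rfl term2]
  simp only [Finset.sum_neg_distrib]
  ring
end

section
/- Let F be a decomposable family of itemsets, X a maximal itemset of F, and x, y ∈ X distinct items. The family obtained by the split operation split(X,x,y) — deleting from F every itemset that contains both x and y — is decomposable if and only if X is the only maximal itemset of F containing both x and y. -/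
open scoped Classical

variable {A : Type*} [Fintype A] [DecidableEq A]

namespace SplitTool

section paths
variable {V : Type*} {G : SimpleGraph V}

noncomputable def pth (ht : G.IsTree) (a b : V) : G.Walk a b :=
  (ht.existsUnique_path a b).choose

lemma pth_isPath (ht : G.IsTree) (a b : V) : (pth ht a b).IsPath :=
  (ht.existsUnique_path a b).choose_spec.1

lemma pth_unique (ht : G.IsTree) {a b : V} {p : G.Walk a b} (hp : p.IsPath) :
    p = pth ht a b :=
  (ht.existsUnique_path a b).choose_spec.2 p hp

lemma mem_pth_symm (ht : G.IsTree) {a b z : V} (hz : z ∈ (pth ht a b).support) :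
    z ∈ (pth ht b a).support := by
  have h : (pth ht a b).reverse = pth ht b a := pth_unique ht ((pth_isPath ht a b).reverse)
  rw [← h, SimpleGraph.Walk.support_reverse, List.mem_reverse]
  exact hz

lemma pth_start_mem (ht : G.IsTree) (a b : V) : a ∈ (pth ht a b).support :=
  SimpleGraph.Walk.start_mem_support _

lemma pth_end_mem (ht : G.IsTree) (a b : V) : b ∈ (pth ht a b).support :=
  SimpleGraph.Walk.end_mem_support _

/-- the prefix of the tree path: `pth a m` is the takeUntil part of `pth a b`. -/
lemma pth_take (ht : G.IsTree) {a b m : V} (hm : m ∈ (pth ht a b).support) :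
    (pth ht a b).takeUntil m hm = pth ht a m :=
  pth_unique ht ((pth_isPath ht a b).takeUntil hm)

lemma pth_drop (ht : G.IsTree) {a b m : V} (hm : m ∈ (pth ht a b).support) :
    (pth ht a b).dropUntil m hm = pth ht m b :=
  pth_unique ht ((pth_isPath ht a b).dropUntil hm)

lemma support_pth_take_subset (ht : G.IsTree) {a b m : V} (hm : m ∈ (pth ht a b).support) :
    (pth ht a m).support ⊆ (pth ht a b).support := by
  rw [← pth_take ht hm]
  exact SimpleGraph.Walk.support_takeUntil_subset _ hm

lemma support_pth_drop_subset (ht : G.IsTree) {a b m : V} (hm : m ∈ (pth ht a b).support) :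
    (pth ht m b).support ⊆ (pth ht a b).support := by
  rw [← pth_drop ht hm]
  exact SimpleGraph.Walk.support_dropUntil_subset _ hm

lemma pth_split (ht : G.IsTree) {a b m : V} (hm : m ∈ (pth ht a b).support) :
    ∀ z ∈ (pth ht a b).support, z ∈ (pth ht a m).support ∨ z ∈ (pth ht m b).support := by
  intro z hz
  rw [← SimpleGraph.Walk.take_spec (pth ht a b) hm, SimpleGraph.Walk.mem_support_append_iff,
    pth_take ht hm, pth_drop ht hm] at hz
  exact hz

lemma pth_length_split (ht : G.IsTree) {a b m : V} (hm : m ∈ (pth ht a b).support) :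
    (pth ht a b).length = (pth ht a m).length + (pth ht m b).length := by
  conv_lhs => rw [← SimpleGraph.Walk.take_spec (pth ht a b) hm]
  rw [SimpleGraph.Walk.length_append, pth_take ht hm, pth_drop ht hm]

lemma pth_length_lt (ht : G.IsTree) {a b z : V} (hz : z ∈ (pth ht a b).support)
    (hza : z ≠ a) : (pth ht z b).length < (pth ht a b).length := by
  have h := pth_length_split ht hz
  have hpos : 0 < (pth ht a z).length := by
    rcases Nat.eq_zero_or_pos (pth ht a z).length with h0 | h0
    · exact absurd (SimpleGraph.Walk.eq_of_length_eq_zero h0).symm hza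
    · exact h0
  omega

/-- appending two paths sharing only the junction vertex gives a path. -/
lemma isPath_append {u m v : V} {p : G.Walk u m} {q : G.Walk m v}
    (hp : p.IsPath) (hq : q.IsPath)
    (hdisj : ∀ z, z ∈ p.support → z ∈ q.support → z = m) : (p.append q).IsPath := by
  rw [SimpleGraph.Walk.isPath_def, SimpleGraph.Walk.support_append, List.nodup_append]
  refine ⟨hp.support_nodup, hq.support_nodup.tail, ?_⟩
  intro z hzp b hzq hzb
  subst hzb
  have hzq' : z ∈ q.support := List.mem_of_mem_tail hzq
  have hz : z = m := hdisj z hzp hzq'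
  subst hz
  have := hq.support_nodup
  rw [q.support_eq_cons] at this
  exact (List.nodup_cons.1 this).1 hzq

/-- first vertex of a walk lying in the set `S`. -/
lemma first_hit (S : Set V) : ∀ {c a : V} (q : G.Walk c a), a ∈ S →
    ∃ m ∈ S, ∃ w : G.Walk c m, (∀ z ∈ w.support, z ∈ S → z = m) ∧
      (∀ z ∈ w.support, z ∈ q.support) := by
  intro c a q
  induction q with
  | nil =>
    intro ha
    exact ⟨_, ha, SimpleGraph.Walk.nil, by intro z hz _; simpa using hz, by simp⟩
  | @cons u v b h p ih =>
    intro ha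
    by_cases hu : u ∈ S
    · exact ⟨u, hu, SimpleGraph.Walk.nil, by intro z hz _; simpa using hz, by simp⟩
    · obtain ⟨m, hmS, w, hw1, hw2⟩ := ih ha
      by_cases hum : u = m
      · exact absurd (hum ▸ hmS) hu
      · refine ⟨m, hmS, SimpleGraph.Walk.cons h w, ?_, ?_⟩
        · intro z hz hzS
          rw [SimpleGraph.Walk.support_cons, List.mem_cons] at hz
          rcases hz with rfl | hz
          · exact absurd hzS hu
          · exact hw1 z hz hzS
        · intro z hz
          rw [SimpleGraph.Walk.support_cons, List.mem_cons] at hz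
          rw [SimpleGraph.Walk.support_cons, List.mem_cons]
          rcases hz with rfl | hz
          · exact Or.inl rfl
          · exact Or.inr (hw2 z hz)

/-- median of three vertices in a tree. -/
lemma median (ht : G.IsTree) (a b c : V) :
    ∃ m, m ∈ (pth ht a b).support ∧ m ∈ (pth ht a c).support ∧ m ∈ (pth ht b c).support := by
  obtain ⟨m, hmS, w, hw1, hw2⟩ := first_hit {z | z ∈ (pth ht a b).support}
    (pth ht c a) (pth_start_mem ht a b)
  have hmab : m ∈ (pth ht a b).support := hmS
  have hmca : m ∈ (pth ht c a).support := hw2 m (SimpleGraph.Walk.end_mem_support w)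
  have hmac : m ∈ (pth ht a c).support := mem_pth_symm ht hmca
  refine ⟨m, hmab, hmac, ?_⟩
  -- build path b → c through m
  have hmba : m ∈ (pth ht b a).support := mem_pth_symm ht hmab
  -- support of pth b m is inside pth b a = pth a b (membership-wise)
  have hsub1 : (pth ht b m).support ⊆ (pth ht b a).support := support_pth_take_subset ht hmba
  set w' : G.Walk c m := (w.toPath : G.Walk c m) with hw'
  have hw'path : w'.IsPath := w.toPath.2
  have hw'sub : w'.support ⊆ w.support := SimpleGraph.Walk.support_toPath_subset w
  have hpath : ((pth ht b m).append w'.reverse).IsPath := by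
    apply isPath_append (pth_isPath ht b m) hw'path.reverse
    intro z hz1 hz2
    rw [SimpleGraph.Walk.support_reverse, List.mem_reverse] at hz2
    have hzw : z ∈ w.support := hw'sub hz2
    have hzS : z ∈ (pth ht a b).support := by
      have := hsub1 hz1
      exact mem_pth_symm ht this
    exact hw1 z hzw hzS
  have : (pth ht b m).append w'.reverse = pth ht b c := pth_unique ht hpath
  rw [← this, SimpleGraph.Walk.mem_support_append_iff]
  exact Or.inl (pth_end_mem ht b m)


end paths

section gate

variable {V : Type*} {G : SimpleGraph V} (ht : G.IsTree)
  (lab : V → Finset A) (y : A)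
  (hrip : ∀ (a : A) (u v : V), a ∈ lab u → a ∈ lab v →
    ∀ z ∈ (pth ht u v).support, a ∈ lab z)

def IsGate (w u : V) : Prop :=
  y ∈ lab u ∧ ∀ z ∈ (pth ht u w).support, y ∈ lab z → z = u

lemma gate_exists (w : V) : ∀ (n : ℕ) (t : V), (pth ht t w).length ≤ n → y ∈ lab t →
    ∃ u, IsGate ht lab y w u ∧ u ∈ (pth ht t w).support := by
  intro n
  induction n using Nat.strong_induction_on with
  | _ n ih =>
    intro t hlen hyt
    by_cases hall : ∀ z ∈ (pth ht t w).support, y ∈ lab z → z = t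
    · exact ⟨t, ⟨hyt, hall⟩, pth_start_mem ht t w⟩
    · push_neg at hall
      obtain ⟨z, hz, hyz, hzt⟩ := hall
      have hlt := pth_length_lt ht hz hzt
      obtain ⟨u, hu, hmem⟩ := ih (pth ht z w).length (lt_of_lt_of_le hlt hlen) z le_rfl hyz
      exact ⟨u, hu, support_pth_drop_subset ht hz hmem⟩

include hrip in
lemma gate_unique {w u u' : V} (hu : IsGate ht lab y w u) (hu' : IsGate ht lab y w u') :
    u = u' := by
  obtain ⟨m, h1, h2, h3⟩ := median ht u u' w
  have hym : y ∈ lab m := hrip y u u' hu.1 hu'.1 m h1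
  have e1 : m = u := hu.2 m h2 hym
  have e2 : m = u' := hu'.2 m h3 hym
  rw [← e1, e2]

include hrip in
lemma gate_mem {w u : V} (hu : IsGate ht lab y w u) {t : V} (hyt : y ∈ lab t) :
    u ∈ (pth ht t w).support := by
  obtain ⟨u'', hg, hmem⟩ := gate_exists ht lab y w (pth ht t w).length t le_rfl hyt
  rwa [gate_unique ht lab y hrip hu hg]

lemma gate_transfer {w w' u : V} (hu : IsGate ht lab y w u)
    (hnone : ∀ z ∈ (pth ht w w').support, y ∉ lab z) : IsGate ht lab y w' u := by
  refine ⟨hu.1, ?_⟩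
  intro z hz hyz
  obtain ⟨m, h1, h2, h3⟩ := median ht u w w'
  rcases pth_split ht h2 z hz with hz1 | hz2
  · exact hu.2 z (support_pth_take_subset ht h1 hz1) hyz
  · exact absurd hyz (hnone z (support_pth_drop_subset ht h3 hz2))

end gate

section families

lemma mem_maximalSets {F : Finset (Finset A)} {M : Finset A} :
    M ∈ maximalSets F ↔ M ∈ F ∧ ∀ Y ∈ F, M ⊆ Y → M = Y := by
  simp [maximalSets, Finset.mem_filter]

lemma exists_maximal_superset (H : Finset (Finset A)) {Z : Finset A} (hZ : Z ∈ H) :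
    ∃ M ∈ maximalSets H, Z ⊆ M := by
  obtain ⟨M, hM, hmax⟩ := (H.filter (fun Y => Z ⊆ Y)).exists_maximal
    ⟨Z, Finset.mem_filter.2 ⟨hZ, Finset.Subset.refl Z⟩⟩
  rw [Finset.mem_filter] at hM
  refine ⟨M, mem_maximalSets.2 ⟨hM.1, fun Y hY hMY => ?_⟩, hM.2⟩
  by_contra hne
  exact hne (le_antisymm hMY (hmax (Finset.mem_filter.2 ⟨hY, hM.2.trans hMY⟩) hMY))

lemma claim1 {F : Finset (Finset A)} (hF : Decomposable F) {X Y : Finset A}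
    (hX : X ∈ maximalSets F) (hY : Y ∈ maximalSets F) (hne : Y ≠ X) {x : A}
    (hxX : x ∈ X) (hxY : x ∈ Y) : (X ∪ Y).erase x ∉ F := by
  intro hZ
  obtain ⟨W, hW, hZW⟩ := exists_maximal_superset F hZ
  obtain ⟨G, ht, hrip0⟩ := hF
  have hrip : ∀ (a : A) (u v : {X // X ∈ maximalSets F}), a ∈ u.1 → a ∈ v.1 →
      ∀ z ∈ (pth ht u v).support, a ∈ z.1 := fun a u v hu hv z hz =>
    hrip0 u v a hu hv _ (pth_isPath ht u v) z hz
  set vX : {X // X ∈ maximalSets F} := ⟨X, hX⟩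
  set vY : {X // X ∈ maximalSets F} := ⟨Y, hY⟩
  set vW : {X // X ∈ maximalSets F} := ⟨W, hW⟩
  obtain ⟨m, h1, h2, h3⟩ := median ht vX vY vW
  -- h1 : m ∈ pth vX vY, h2 : m ∈ pth vX vW, h3 : m ∈ pth vY vW
  have hXm : X ⊆ m.1 := by
    intro a ha
    by_cases hax : a = x
    · subst hax; exact hrip a vX vY hxX hxY m h1
    · have haZ : a ∈ (X ∪ Y).erase x := Finset.mem_erase.2 ⟨hax, Finset.mem_union_left _ ha⟩
      exact hrip a vX vW ha (hZW haZ) m h2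
  have hYm : Y ⊆ m.1 := by
    intro a ha
    by_cases hax : a = x
    · subst hax; exact hrip a vX vY hxX hxY m h1
    · have haZ : a ∈ (X ∪ Y).erase x := Finset.mem_erase.2 ⟨hax, Finset.mem_union_right _ ha⟩
      exact hrip a vY vW ha (hZW haZ) m h3
  have hXeq : X = m.1 := (mem_maximalSets.1 hX).2 m.1 (mem_maximalSets.1 m.2).1 hXm
  have hYeq : Y = m.1 := (mem_maximalSets.1 hY).2 m.1 (mem_maximalSets.1 m.2).1 hYm
  exact hne (hYeq.trans hXeq.symm)

lemma forward {F : Finset (Finset A)} (hdc : DownwardClosed F) (hF : Decomposable F)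
    {X : Finset A} (hX : X ∈ maximalSets F) {x y : A} (hx : x ∈ X) (hy : y ∈ X)
    (hxy : x ≠ y) (hD : Decomposable (F.filter fun Z => ¬(x ∈ Z ∧ y ∈ Z))) :
    ∀ Y ∈ maximalSets F, x ∈ Y → y ∈ Y → Y = X := by
  intro Y hY hxY hyY
  by_contra hne
  set F' : Finset (Finset A) := F.filter fun Z => ¬(x ∈ Z ∧ y ∈ Z) with hF'
  have hXF : X ∈ F := (mem_maximalSets.1 hX).1
  have hYF : Y ∈ F := (mem_maximalSets.1 hY).1
  have hmemF' : ∀ {Z : Finset A}, Z ∈ F → ¬(x ∈ Z ∧ y ∈ Z) → Z ∈ F' := by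
    intro Z h1 h2; exact Finset.mem_filter.2 ⟨h1, h2⟩
  -- the four erased sets are in F'
  have hXx : X.erase x ∈ F' := hmemF' (hdc X hXF _ (Finset.erase_subset x X))
    (fun h => (Finset.mem_erase.1 h.1).1 rfl)
  have hXy : X.erase y ∈ F' := hmemF' (hdc X hXF _ (Finset.erase_subset y X))
    (fun h => (Finset.mem_erase.1 h.2).1 rfl)
  have hYx : Y.erase x ∈ F' := hmemF' (hdc Y hYF _ (Finset.erase_subset x Y))
    (fun h => (Finset.mem_erase.1 h.1).1 rfl)
  have hYy : Y.erase y ∈ F' := hmemF' (hdc Y hYF _ (Finset.erase_subset y Y))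
    (fun h => (Finset.mem_erase.1 h.2).1 rfl)
  obtain ⟨M1, hM1, hs1⟩ := exists_maximal_superset F' hXx
  obtain ⟨M2, hM2, hs2⟩ := exists_maximal_superset F' hXy
  obtain ⟨M3, hM3, hs3⟩ := exists_maximal_superset F' hYx
  obtain ⟨M4, hM4, hs4⟩ := exists_maximal_superset F' hYy
  obtain ⟨G, ht, hrip0⟩ := hD
  set VT := {Z // Z ∈ maximalSets F'}
  have hlabF' : ∀ v : VT, v.1 ∈ F' := fun v => (mem_maximalSets.1 v.2).1
  have hdisj : ∀ v : VT, ¬(x ∈ v.1 ∧ y ∈ v.1) := fun v =>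
    (Finset.mem_filter.1 (hlabF' v)).2
  set lab : VT → Finset A := fun v => v.1 with hlab
  have hrip : ∀ (a : A) (u v : VT), a ∈ lab u → a ∈ lab v →
      ∀ z ∈ (pth ht u v).support, a ∈ lab z := fun a u v hu hv z hz =>
    hrip0 u v a hu hv _ (pth_isPath ht u v) z hz
  set v1 : VT := ⟨M1, hM1⟩
  set v2 : VT := ⟨M2, hM2⟩
  set v3 : VT := ⟨M3, hM3⟩
  set v4 : VT := ⟨M4, hM4⟩
  have hyM1 : y ∈ lab v1 := hs1 (Finset.mem_erase.2 ⟨hxy.symm, hy⟩)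
  have hyM3 : y ∈ lab v3 := hs3 (Finset.mem_erase.2 ⟨hxy.symm, hyY⟩)
  have hxM2 : x ∈ lab v2 := hs2 (Finset.mem_erase.2 ⟨hxy, hx⟩)
  have hxM4 : x ∈ lab v4 := hs4 (Finset.mem_erase.2 ⟨hxy, hxY⟩)
  -- gate for v2 starting from v1
  obtain ⟨u, hu, humem⟩ := gate_exists ht lab y v2 (pth ht v1 v2).length v1 le_rfl hyM1
  -- transfer the gate to v4
  have hnone : ∀ z ∈ (pth ht v2 v4).support, y ∉ lab z := by
    intro z hz hyz
    exact hdisj z ⟨hrip x v2 v4 hxM2 hxM4 z hz, hyz⟩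
  have hu4 : IsGate ht lab y v4 u := gate_transfer ht lab y hu hnone
  have humem34 : u ∈ (pth ht v3 v4).support := gate_mem ht lab y hrip hu4 hyM3
  -- u contains (X ∪ Y).erase x
  have hsub : (X ∪ Y).erase x ⊆ lab u := by
    intro a ha
    obtain ⟨hax, haXY⟩ := Finset.mem_erase.1 ha
    by_cases hay : a = y
    · subst hay; exact hu.1
    · rcases Finset.mem_union.1 haXY with haX | haY
      · have h1 : a ∈ lab v1 := hs1 (Finset.mem_erase.2 ⟨hax, haX⟩)
        have h2 : a ∈ lab v2 := hs2 (Finset.mem_erase.2 ⟨hay, haX⟩)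
        exact hrip a v1 v2 h1 h2 u humem
      · have h3 : a ∈ lab v3 := hs3 (Finset.mem_erase.2 ⟨hax, haY⟩)
        have h4 : a ∈ lab v4 := hs4 (Finset.mem_erase.2 ⟨hay, haY⟩)
        exact hrip a v3 v4 h3 h4 u humem34
  have hmemF : (X ∪ Y).erase x ∈ F := by
    have huF : lab u ∈ F := (Finset.mem_filter.1 (hlabF' u)).1
    exact hdc _ huF _ hsub
  exact claim1 hF hX hY hne hx hxY hmemF

end families

section jstruct

variable {V : Type*} (root : V) (par : V → V) (μ : V → ℕ)

def parGraph : SimpleGraph V where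
  Adj u v := u ≠ v ∧ ((u ≠ root ∧ v = par u) ∨ (v ≠ root ∧ u = par v))
  symm := by
    constructor
    rintro u v ⟨h1, h2⟩
    exact ⟨h1.symm, h2.symm⟩
  loopless := ⟨fun v h => h.1 rfl⟩

/-- the "towards the root" relation: one parent step. -/
def parStep (p q : V) : Prop := p ≠ root ∧ q = par p

/-- reflexive transitive closure of parent steps. -/
def RU (a b : V) : Prop := Relation.ReflTransGen (parStep root par) a b

variable {root par μ}
variable (hpar : ∀ v, v ≠ root → μ (par v) < μ v)

include hpar

lemma par_ne {v : V} (hv : v ≠ root) : v ≠ par v :=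
  fun h => absurd (hpar v hv) (by rw [← h]; exact lt_irrefl _)

lemma parGraph_adj_par {v : V} (hv : v ≠ root) : (parGraph root par).Adj v (par v) :=
  ⟨par_ne hpar hv, Or.inl ⟨hv, rfl⟩⟩

lemma RU_mu_le {a b : V} (h : RU root par a b) : μ b ≤ μ a := by
  induction h with
  | refl => exact le_rfl
  | tail hac hcb ih =>
    have := hpar _ hcb.1
    rw [← hcb.2] at this
    omega

lemma RU_mu_lt {a b : V} (h : RU root par a b) (hne : a ≠ b) : μ b < μ a := by
  rcases (Relation.ReflTransGen.cases_head h) with h' | ⟨c, hac, hcb⟩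
  · exact absurd h' hne
  · have h1 : μ c < μ a := by
      have := hpar a hac.1; rw [← hac.2] at this; exact this
    exact lt_of_le_of_lt (RU_mu_le hpar hcb) h1

lemma RU_root : ∀ v : V, RU root par v root := by
  have : ∀ (n : ℕ) (v : V), μ v ≤ n → RU root par v root := by
    intro n
    induction n using Nat.strong_induction_on with
    | _ n ih =>
      intro v hv
      by_cases hvr : v = root
      · exact hvr ▸ Relation.ReflTransGen.refl
      · have hlt := hpar v hvr
        exact Relation.ReflTransGen.head ⟨hvr, rfl⟩ (ih (μ (par v)) (lt_of_lt_of_le hlt hv) _ le_rfl)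
  exact fun v => this (μ v) v le_rfl

lemma parGraph_reach_root : ∀ v : V, (parGraph root par).Reachable v root := by
  have : ∀ (n : ℕ) (v : V), μ v ≤ n → (parGraph root par).Reachable v root := by
    intro n
    induction n using Nat.strong_induction_on with
    | _ n ih =>
      intro v hv
      by_cases hvr : v = root
      · exact hvr ▸ SimpleGraph.Reachable.refl _
      · have hlt := hpar v hvr
        exact ((parGraph_adj_par hpar hvr).reachable).trans
          (ih (μ (par v)) (lt_of_lt_of_le hlt hv) _ le_rfl)
  exact fun v => this (μ v) v le_rfl

lemma parGraph_connected : (parGraph root par).Connected := by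
  have hne : Nonempty V := ⟨root⟩
  rw [SimpleGraph.connected_iff]
  refine ⟨fun u v => ?_, hne⟩
  exact (parGraph_reach_root hpar u).trans (parGraph_reach_root hpar v).symm

lemma parGraph_acyclic : (parGraph root par).IsAcyclic := by
  rw [SimpleGraph.isAcyclic_iff_forall_edge_isBridge]
  intro e he
  induction e with
  | _ a b =>
    rw [SimpleGraph.mem_edgeSet] at he
    -- reduce to the case of an edge (u, par u), u ≠ root
    have key : ∀ u : V, u ≠ root →
        (parGraph root par).IsBridge s(u, par u) := by
      intro u hu
      rw [SimpleGraph.isBridge_iff]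
      intro hreach
      obtain ⟨w⟩ := hreach
      set S : Set V := {j | RU root par j u} with hS
      have huS : u ∈ S := Relation.ReflTransGen.refl
      have hpuS : par u ∉ S := by
        intro hmem
        have := RU_mu_le hpar hmem
        have := hpar u hu
        omega
      obtain ⟨d, hd, hfst, hsnd⟩ := w.exists_boundary_dart S huS hpuS
      have hadj := d.adj
      rw [SimpleGraph.deleteEdges_adj] at hadj
      obtain ⟨hadj1, hadj2⟩ := hadj
      have hne' : ¬(s(d.fst, d.snd) = s(u, par u)) := fun h => hadj2 (by rw [h]; exact Set.mem_singleton _)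
      rcases hadj1.2 with ⟨h1, h2⟩ | ⟨h1, h2⟩
      · -- d.snd = par d.fst, d.fst ≠ root
        by_cases hdu : d.fst = u
        · exact hne' (by rw [hdu, h2, hdu])
        · rcases Relation.ReflTransGen.cases_head hfst with h' | ⟨c, hstep, hRU⟩
          · exact hdu h'
          · exact hsnd (by rw [hS, Set.mem_setOf_eq, h2, ← hstep.2]; exact hRU)
      · -- d.fst = par d.snd, d.snd ≠ root
        exact hsnd (Relation.ReflTransGen.head ⟨h1, h2⟩ hfst)
    rcases he.2 with ⟨h1, h2⟩ | ⟨h1, h2⟩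
    · rw [h2]; exact key a h1
    · rw [Sym2.eq_swap, h2]; exact key b h1

lemma parGraph_isTree : (parGraph root par).IsTree :=
  ⟨parGraph_connected hpar, parGraph_acyclic hpar⟩

variable {L : V → Finset A}
  (hrip : ∀ a : A, ∃ m : V, ∀ j, a ∈ L j → j ≠ m → j ≠ root ∧ a ∈ L (par j))

include hrip

/-- walk within the `a`-vertices to the exceptional vertex `m`. -/
lemma walk_to_m {a : A} {m : V} (hm : ∀ j, a ∈ L j → j ≠ m → j ≠ root ∧ a ∈ L (par j)) :
    ∀ j, a ∈ L j → ∃ w : (parGraph root par).Walk j m, ∀ z ∈ w.support, a ∈ L z := by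
  have : ∀ (n : ℕ) (j : V), μ j ≤ n → a ∈ L j →
      ∃ w : (parGraph root par).Walk j m, ∀ z ∈ w.support, a ∈ L z := by
    intro n
    induction n using Nat.strong_induction_on with
    | _ n ih =>
      intro j hj ha
      by_cases hjm : j = m
      · subst hjm
        exact ⟨SimpleGraph.Walk.nil, by intro z hz; simp at hz; rwa [hz]⟩
      · obtain ⟨hjr, hpa⟩ := hm j ha hjm
        have hlt := hpar j hjr
        obtain ⟨w, hw⟩ := ih (μ (par j)) (lt_of_lt_of_le hlt hj) _ le_rfl hpa
        refine ⟨SimpleGraph.Walk.cons (parGraph_adj_par hpar hjr) w, ?_⟩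
        intro z hz
        rw [SimpleGraph.Walk.support_cons, List.mem_cons] at hz
        rcases hz with rfl | hz
        · exact ha
        · exact hw z hz
  exact fun j ha => this (μ j) j le_rfl ha

omit hpar in
lemma walk_support_subset_rip {a : A} {u v m : V}
    (wu : (parGraph root par).Walk u m) (wv : (parGraph root par).Walk v m)
    (hwu : ∀ z ∈ wu.support, a ∈ L z) (hwv : ∀ z ∈ wv.support, a ∈ L z) :
    ∀ z ∈ (wu.append wv.reverse).support, a ∈ L z := by
  intro z hz
  rw [SimpleGraph.Walk.mem_support_append_iff] at hz
  rcases hz with hz | hz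
  · exact hwu z hz
  · rw [SimpleGraph.Walk.support_reverse, List.mem_reverse] at hz
    exact hwv z hz

lemma parGraph_junction :
    ∀ (a : A) (u v : V), a ∈ L u → a ∈ L v →
      ∀ p : (parGraph root par).Walk u v, p.IsPath → ∀ z ∈ p.support, a ∈ L z := by
  intro a u v hu hv p hp z hz
  obtain ⟨m, hm⟩ := hrip a
  obtain ⟨wu, hwu⟩ := walk_to_m hpar hrip hm u hu
  obtain ⟨wv, hwv⟩ := walk_to_m hpar hrip hm v hv
  set w : (parGraph root par).Walk u v := wu.append wv.reverse with hw
  have hwrip := walk_support_subset_rip hrip wu wv hwu hwv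
  have htree := parGraph_isTree hpar
  have h1 : p = (w.toPath : (parGraph root par).Walk u v) :=
    ExistsUnique.unique (htree.existsUnique_path u v) hp w.toPath.2
  rw [h1] at hz
  exact hwrip z (SimpleGraph.Walk.support_toPath_subset w hz)

omit hrip in
lemma RU_push {a : A} {ma : V} (hma : ∀ j, a ∈ L j → j ≠ ma → j ≠ root ∧ a ∈ L (par j))
    {j k : V} (h : RU root par j k) (ha : a ∈ L j) (hμ : μ ma < μ k) : a ∈ L k := by
  induction h using Relation.ReflTransGen.head_induction_on with
  | refl => exact ha
  | @head b c hstep hRU ih =>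
    apply ih
    have hbk : RU root par b k := Relation.ReflTransGen.head hstep hRU
    have h1 : μ k ≤ μ b := RU_mu_le hpar hbk
    have hbm : b ≠ ma := fun h' => by rw [h'] at h1; omega
    have := (hma b ha hbm).2
    rwa [← hstep.2] at this

omit hrip in
lemma RU_to_m {a : A} {ma : V} (hma : ∀ j, a ∈ L j → j ≠ ma → j ≠ root ∧ a ∈ L (par j)) :
    ∀ j, a ∈ L j → RU root par j ma := by
  have key : ∀ (n : ℕ) (j : V), μ j ≤ n → a ∈ L j → RU root par j ma := by
    intro n
    induction n using Nat.strong_induction_on with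
    | _ n ih =>
      intro j hj ha
      by_cases hjm : j = ma
      · exact hjm ▸ Relation.ReflTransGen.refl
      · obtain ⟨hjr, hpa⟩ := hma j ha hjm
        have hlt := hpar j hjr
        exact Relation.ReflTransGen.head ⟨hjr, rfl⟩ (ih (μ (par j)) (by omega) _ le_rfl hpa)
  exact fun j ha => key (μ j) j le_rfl ha

end jstruct

section jmain


theorem jstruct_decomposable (F' : Finset (Finset A)) :
    ∀ (n : ℕ) {V : Type*} [Fintype V] (root : V) (par : V → V) (μ : V → ℕ) (L : V → Finset A),
      Fintype.card V ≤ n →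
      (∀ v, v ≠ root → μ (par v) < μ v) →
      (∀ v, L v ∈ F') →
      (∀ M ∈ maximalSets F', ∃ v, L v = M) →
      (∀ a : A, ∃ m : V, ∀ j, a ∈ L j → j ≠ m → j ≠ root ∧ a ∈ L (par j)) →
      Decomposable F' := by
  intro n
  induction n with
  | zero =>
    intro V _ root par μ L hcard hpar hlab hcover hrip
    have : 0 < Fintype.card V := Fintype.card_pos_iff.2 ⟨root⟩
    omega
  | succ n ih =>
    intro V _ root par μ L hcard hpar hlab hcover hrip
    by_cases hgood : ∀ v : V, L v ∈ maximalSets F' ∧ ∀ w, L w = L v → w = v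
    · -- build the junction tree on the maximal sets
      have hinj : Function.Injective L := fun a b h => (hgood b).2 a h
      let e : V ≃ {M // M ∈ maximalSets F'} :=
      { toFun := fun v => ⟨L v, (hgood v).1⟩
        invFun := fun M => (hcover M.1 M.2).choose
        left_inv := fun v => hinj (hcover (L v) (hgood v).1).choose_spec
        right_inv := fun M => Subtype.ext (hcover M.1 M.2).choose_spec }
      have htree := parGraph_isTree hpar
      have hjun := parGraph_junction hpar hrip
      let K : SimpleGraph {M // M ∈ maximalSets F'} :=
      { Adj := fun P Q => (parGraph root par).Adj (e.symm P) (e.symm Q)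
        symm := ⟨fun P Q h => h.symm⟩
        loopless := ⟨fun P h => (parGraph root par).loopless.irrefl _ h⟩ }
      have hKadj : ∀ P Q, K.Adj P Q ↔ (parGraph root par).Adj (e.symm P) (e.symm Q) :=
        fun P Q => Iff.rfl
      let φ : (parGraph root par) ≃g K :=
      { toEquiv := e
        map_rel_iff' := by
          intro a b
          show (parGraph root par).Adj (e.symm (e a)) (e.symm (e b)) ↔ _
          rw [e.symm_apply_apply, e.symm_apply_apply] }
      have hLsymm : ∀ P : {M // M ∈ maximalSets F'}, L (e.symm P) = P.1 := by
        intro P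
        exact congrArg Subtype.val (e.apply_symm_apply P)
      have hconn : K.Connected := φ.connected_iff.mp htree.isConnected
      have hinj' : Function.Injective (fun x => e.symm x : {M // M ∈ maximalSets F'} → V) :=
        fun x y hxy => e.symm.injective hxy
      have hacyc : K.IsAcyclic := by
        intro v c hc
        exact parGraph_acyclic hpar (c.map φ.symm.toHom)
          ((SimpleGraph.Walk.map_isCycle_iff_of_injective hinj').mpr hc)
      refine ⟨K, ⟨hconn, hacyc⟩, ?_⟩
      intro P Q a haP haQ p hp Z hZ
      have hp' : (p.map φ.symm.toHom).IsPath :=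
        SimpleGraph.Walk.map_isPath_of_injective hinj' hp
      have hmem : (e.symm Z) ∈ (p.map φ.symm.toHom).support := by
        rw [SimpleGraph.Walk.support_map]
        exact List.mem_map_of_mem hZ
      have := hjun a (e.symm P) (e.symm Q) (by rw [hLsymm]; exact haP)
        (by rw [hLsymm]; exact haQ) (p.map φ.symm.toHom) hp' (e.symm Z) hmem
      rwa [hLsymm] at this
    · -- contraction step
      push_neg at hgood
      obtain ⟨v₀, hbad⟩ := hgood
      obtain ⟨m, hmv, hsubm⟩ : ∃ m : V, m ≠ v₀ ∧ L v₀ ⊆ L m := by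
        by_cases hmax : L v₀ ∈ maximalSets F'
        · obtain ⟨w, hw1, hw2⟩ := hbad hmax
          exact ⟨w, hw2, hw1 ▸ Finset.Subset.refl _⟩
        · obtain ⟨M, hM, hsub⟩ := exists_maximal_superset F' (hlab v₀)
          obtain ⟨w, hw⟩ := hcover M hM
          refine ⟨w, ?_, hw ▸ hsub⟩
          rintro rfl
          exact hmax (hw ▸ hM)
      obtain ⟨N, hNv, hNsub, hNcase⟩ : ∃ N, N ≠ v₀ ∧ L v₀ ⊆ L N ∧
          ((RU root par m v₀ ∧ N ≠ root ∧ par N = v₀ ∧ RU root par m N) ∨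
           (¬ RU root par m v₀ ∧ v₀ ≠ root ∧ N = par v₀)) := by
        by_cases hR : RU root par m v₀
        · rcases Relation.ReflTransGen.cases_tail hR with heq | ⟨c, hmc, hcr, hcp⟩
          · exact absurd heq.symm hmv
          · have hμc : μ v₀ < μ c := by
              have := hpar c hcr; rwa [← hcp] at this
            refine ⟨c, fun h => by rw [h] at hμc; omega, ?_, Or.inl ⟨hR, hcr, hcp.symm, hmc⟩⟩
            intro a ha
            obtain ⟨ma, hma⟩ := hrip a
            have ham : a ∈ L m := hsubm ha
            have h1 : RU root par v₀ ma := RU_to_m hpar hma v₀ ha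
            have hμma : μ ma ≤ μ v₀ := RU_mu_le hpar h1
            exact RU_push hpar hma hmc ham (by omega)
        · have hv₀r : v₀ ≠ root := fun h => hR (h ▸ RU_root hpar m)
          refine ⟨par v₀, fun h => (par_ne hpar hv₀r) h.symm, ?_, Or.inr ⟨hR, hv₀r, rfl⟩⟩
          intro a ha
          obtain ⟨ma, hma⟩ := hrip a
          have ham : a ∈ L m := hsubm ha
          have h1 : RU root par m ma := RU_to_m hpar hma m ham
          have hne : ma ≠ v₀ := fun h => hR (h ▸ h1)
          exact (hma v₀ ha (fun h => hne (h.symm ▸ rfl))).2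
      -- the contracted structure on the subtype
      set root' : {u : V // u ≠ v₀} :=
        (if h : v₀ = root then ⟨N, hNv⟩ else ⟨root, fun he => h he.symm⟩) with hroot'
      set par' : {u : V // u ≠ v₀} → {u : V // u ≠ v₀} := fun u =>
        if hpu : par u.1 = v₀ then
          (if u.1 = N then
            (if h : v₀ = root then u else ⟨par v₀, fun he => (par_ne hpar h) he.symm⟩)
          else ⟨N, hNv⟩)
        else ⟨par u.1, hpu⟩ with hpar'def
      set μ' : {u : V // u ≠ v₀} → ℕ := fun u =>
        if u.1 = N ∧ RU root par m v₀ then 2 * μ v₀ + 1 else 2 * μ u.1 with hμ'def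
      have hcard' : Fintype.card {u : V // u ≠ v₀} ≤ n := by
        have : Fintype.card {u : V // u ≠ v₀} < Fintype.card V :=
          Fintype.card_subtype_lt (x := v₀) (by simp)
        omega
      have hrootval : root'.1 = if v₀ = root then N else root := by
        rw [hroot']
        split_ifs <;> rfl
      refine ih root' par' μ' (fun u => L u.1) hcard' ?_ (fun u => hlab u.1)
        ?_ ?_
      · -- hpar'
        rintro ⟨w, hw⟩ hu
        have hwroot : w ≠ root := by
          by_cases hvr : v₀ = root
          · exact fun h => hw (h.trans hvr.symm)
          · intro h
            apply hu
            apply Subtype.ext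
            rw [hrootval, if_neg hvr]
            exact h
        rw [hpar'def, hμ'def]
        dsimp only
        by_cases hpw : par w = v₀
        · have hμw : μ v₀ < μ w := by have := hpar w hwroot; rwa [hpw] at this
          rw [dif_pos hpw]
          by_cases hwN : w = N
          · rw [if_pos hwN]
            have hvr : v₀ ≠ root := by
              intro h
              exact hu (Subtype.ext (by rw [hrootval, if_pos h]; exact hwN))
            rw [dif_neg hvr]
            dsimp only
            have hpv₀v : par v₀ ≠ v₀ := fun h => (par_ne hpar hvr) h.symm
            have hμpv₀ : μ (par v₀) < μ v₀ := hpar v₀ hvr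
            have hpv₀N : ¬(par v₀ = N ∧ RU root par m v₀) := by
              rintro ⟨h1, h2⟩
              rcases hNcase with ⟨_, hNr, hpN, _⟩ | ⟨hnR, _, _⟩
              · have := hpar N hNr
                rw [hpN] at this
                rw [h1] at hμpv₀
                omega
              · exact hnR h2
            rw [if_neg hpv₀N]
            by_cases hR : RU root par m v₀
            · rw [if_pos ⟨hwN, hR⟩]; omega
            · rw [if_neg (show ¬(w = N ∧ RU root par m v₀) from fun hh => hR hh.2)]; omega
          · rw [if_neg hwN]
            dsimp only
            by_cases hR : RU root par m v₀
            · rw [if_pos (⟨rfl, hR⟩ : N = N ∧ RU root par m v₀),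
                if_neg (show ¬(w = N ∧ RU root par m v₀) from fun hh => hwN hh.1)]
              omega
            · rw [if_neg (show ¬(N = N ∧ RU root par m v₀) from fun hh => hR hh.2),
                if_neg (show ¬(w = N ∧ RU root par m v₀) from fun hh => hR hh.2)]
              rcases hNcase with ⟨hR', _, _, _⟩ | ⟨_, hv₀r, hNp⟩
              · exact absurd hR' hR
              · have := hpar v₀ hv₀r
                rw [← hNp] at this
                omega
        · rw [dif_neg hpw]
          dsimp only
          have hμpw := hpar w hwroot
          have hwNR : ¬(w = N ∧ RU root par m v₀) := by
            rintro ⟨h1, h2⟩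
            rcases hNcase with ⟨_, _, hpN, _⟩ | ⟨hnR, _, _⟩
            · exact hpw (h1 ▸ hpN)
            · exact hnR h2
          rw [if_neg hwNR]
          by_cases hpwN : par w = N ∧ RU root par m v₀
          · rw [if_pos hpwN]
            rcases hNcase with ⟨_, hNr, hpN, _⟩ | ⟨hnR, _, _⟩
            · have h1 := hpar N hNr
              rw [hpN] at h1
              rw [hpwN.1] at hμpw
              omega
            · exact absurd hpwN.2 hnR
          · rw [if_neg hpwN]
            omega
      · -- hcover'
        intro M hM
        obtain ⟨v, hv⟩ := hcover M hM
        by_cases hvv : v = v₀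
        · obtain ⟨w, hw1, hw2⟩ := hbad (by rw [← hvv, hv]; exact hM)
          exact ⟨⟨w, hw2⟩, by show L w = M; rw [hw1, ← hvv]; exact hv⟩
        · exact ⟨⟨v, hvv⟩, hv⟩
      · -- hrip'
        intro a
        obtain ⟨ma, hma⟩ := hrip a
        by_cases hv : ma = v₀
        · refine ⟨⟨N, hNv⟩, ?_⟩
          rintro ⟨j, hj⟩ ha hjm
          have hjN : j ≠ N := fun h => hjm (Subtype.ext h)
          have hjma : j ≠ ma := fun h => hj (h.trans hv)
          obtain ⟨hjr, hpj⟩ := hma j ha hjma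
          constructor
          · intro h
            have := congrArg Subtype.val h
            rw [hrootval] at this
            dsimp only at this
            split_ifs at this
            · exact hjN this
            · exact hjr this
          · rw [hpar'def]
            dsimp only
            by_cases hpjv : par j = v₀
            · rw [dif_pos hpjv, if_neg hjN]
              exact hNsub (hpjv ▸ hpj)
            · rw [dif_neg hpjv]
              exact hpj
        · refine ⟨⟨ma, hv⟩, ?_⟩
          rintro ⟨j, hj⟩ ha hjm
          have hjma : j ≠ ma := fun h => hjm (Subtype.ext h)
          obtain ⟨hjr, hpj⟩ := hma j ha hjma
          constructor
          · intro h
            have hval := congrArg Subtype.val h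
            rw [hrootval] at hval
            dsimp only at hval
            split_ifs at hval with hvr
            · -- v₀ = root and j = N
              have hRm : RU root par m v₀ := hvr ▸ RU_root hpar m
              rcases hNcase with ⟨_, _, hpN, _⟩ | ⟨hnR, _, _⟩
              · have hav₀ : a ∈ L v₀ := by
                  rw [← hpN, ← hval]
                  exact hpj
                obtain ⟨hv₀r, _⟩ := hma v₀ hav₀ (fun h' => hv h'.symm)
                exact hv₀r hvr
              · exact hnR hRm
            · exact hjr hval
          · rw [hpar'def]
            dsimp only
            by_cases hpjv : par j = v₀
            · have hav₀ : a ∈ L v₀ := hpjv ▸ hpj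
              obtain ⟨hv₀r, hpv₀⟩ := hma v₀ hav₀ (fun h' => hv h'.symm)
              rw [dif_pos hpjv]
              by_cases hjN : j = N
              · rw [if_pos hjN, dif_neg hv₀r]
                exact hpv₀
              · rw [if_neg hjN]
                exact hNsub hav₀
            · rw [dif_neg hpjv]
              exact hpj

end jmain

section lemD


lemma decomposable_parstruct {F : Finset (Finset A)}
    {G : SimpleGraph {Z // Z ∈ maximalSets F}} (hT : IsJunctionTree F G)
    (r : {Z // Z ∈ maximalSets F}) :
    ∃ (par : {Z // Z ∈ maximalSets F} → {Z // Z ∈ maximalSets F})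
      (μ : {Z // Z ∈ maximalSets F} → ℕ),
      (∀ v, v ≠ r → μ (par v) < μ v) ∧
      (∀ a : A, ∃ m, ∀ j, a ∈ j.1 → j ≠ m → j ≠ r ∧ a ∈ (par j).1) := by
  have ht := hT.1
  have hrip : ∀ (a : A) (u v : {Z // Z ∈ maximalSets F}), a ∈ u.1 → a ∈ v.1 →
      ∀ z ∈ (pth ht u v).support, a ∈ z.1 := fun a u v hu hv z hz =>
    hT.2 u v a hu hv _ (pth_isPath ht u v) z hz
  have hep : ∀ v, v ≠ r → ∃ u, (pth ht v r).length = (pth ht u r).length + 1 ∧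
      ∀ m', m' ∈ (pth ht v r).support → m' ≠ v → u ∈ (pth ht v m').support := by
    intro v hv
    cases hpd : pth ht v r with
    | nil => exact absurd rfl hv
    | @cons _ u _ h q =>
      have hqpath : q.IsPath ∧ v ∉ q.support := by
        have := pth_isPath ht v r
        rw [hpd, SimpleGraph.Walk.cons_isPath_iff] at this
        exact this
      have hq : q = pth ht u r := pth_unique ht hqpath.1
      refine ⟨u, ?_, ?_⟩
      · simp [SimpleGraph.Walk.length_cons, hq]
      · intro m' hm' hm'v
        have hm'q : m' ∈ q.support := by
          rw [SimpleGraph.Walk.support_cons, List.mem_cons] at hm'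
          rcases hm' with h' | h'
          · exact absurd h' hm'v
          · exact h'
        have hm'u : m' ∈ (pth ht u r).support := hq ▸ hm'q
        have hsub : (pth ht u m').support ⊆ q.support := by
          rw [hq]
          exact support_pth_take_subset ht hm'u
        have hcons : (SimpleGraph.Walk.cons h (pth ht u m')).IsPath := by
          rw [SimpleGraph.Walk.cons_isPath_iff]
          exact ⟨pth_isPath ht u m', fun hvm => hqpath.2 (hsub hvm)⟩
        have := pth_unique ht hcons
        rw [← this, SimpleGraph.Walk.support_cons]
        exact List.mem_cons_of_mem _ (SimpleGraph.Walk.start_mem_support _)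
  classical
  refine ⟨fun v => if h : v = r then v else (hep v h).choose,
    fun v => (pth ht v r).length, ?_, ?_⟩
  · intro v hv
    dsimp only
    rw [dif_neg hv]
    have := (hep v hv).choose_spec.1
    omega
  · intro a
    by_cases hS : ∃ j : {Z // Z ∈ maximalSets F}, a ∈ j.1
    · obtain ⟨j₀, hj₀⟩ := hS
      obtain ⟨mv, hmv_mem, hmv_min⟩ := Finset.exists_min_image
        (Finset.univ.filter (fun j : {Z // Z ∈ maximalSets F} => a ∈ j.1))
        (fun v => (pth ht v r).length) ⟨j₀, by simp [hj₀]⟩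
      have hamv : a ∈ mv.1 := (Finset.mem_filter.1 hmv_mem).2
      refine ⟨mv, ?_⟩
      intro j haj hjm
      have hμr : (pth ht r r).length = 0 := by
        have : (SimpleGraph.Walk.nil : G.Walk r r) = pth ht r r :=
          pth_unique ht SimpleGraph.Walk.IsPath.nil
        rw [← this]
        rfl
      have hjr : j ≠ r := by
        intro hjreq
        have h1 : (pth ht mv r).length ≤ (pth ht j r).length :=
          hmv_min j (by simp [haj])
        rw [hjreq, hμr] at h1
        have h2 : mv = r := SimpleGraph.Walk.eq_of_length_eq_zero (Nat.le_zero.1 h1)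
        exact hjm (hjreq.trans h2.symm)
      refine ⟨hjr, ?_⟩
      dsimp only
      rw [dif_neg hjr]
      obtain ⟨m', h1, h2, h3⟩ := median ht j mv r
      have hm'j : m' ≠ j := by
        intro hm'eq
        have hsplit := pth_length_split ht h3
        have hmin : (pth ht mv r).length ≤ (pth ht m' r).length :=
          hmv_min m' (by simp [hm'eq.symm ▸ haj])
        have hz : (pth ht mv m').length = 0 := by omega
        have h2 := SimpleGraph.Walk.eq_of_length_eq_zero hz
        exact hjm (hm'eq ▸ h2.symm)
      have hu := (hep j hjr).choose_spec.2 m' h2 hm'j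
      have hsub : (pth ht j m').support ⊆ (pth ht j mv).support :=
        support_pth_take_subset ht h1
      exact hrip a j mv haj hamv _ (hsub hu)
    · exact ⟨r, fun j haj _ => absurd ⟨j, haj⟩ hS⟩

end lemD

section backward


lemma backward {F : Finset (Finset A)} (hdc : DownwardClosed F)
    (hF : Decomposable F) {X : Finset A} (hX : X ∈ maximalSets F) {x y : A}
    (hx : x ∈ X) (hy : y ∈ X) (hxy : x ≠ y)
    (hu : ∀ Y ∈ maximalSets F, x ∈ Y → y ∈ Y → Y = X) :
    Decomposable (F.filter fun Z => ¬(x ∈ Z ∧ y ∈ Z)) := by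
  classical
  set F' : Finset (Finset A) := F.filter fun Z => ¬(x ∈ Z ∧ y ∈ Z) with hF'def
  have hXF : X ∈ F := (mem_maximalSets.1 hX).1
  have hXx : X.erase x ∈ F' := Finset.mem_filter.2
    ⟨hdc X hXF _ (Finset.erase_subset x X), fun h => (Finset.mem_erase.1 h.1).1 rfl⟩
  have hXy : X.erase y ∈ F' := Finset.mem_filter.2
    ⟨hdc X hXF _ (Finset.erase_subset y X), fun h => (Finset.mem_erase.1 h.2).1 rfl⟩
  -- maximal sets of F other than X are in F'
  have hmaxF' : ∀ W, W ∈ maximalSets F → W ≠ X → W ∈ F' := by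
    intro W hW hWX
    refine Finset.mem_filter.2 ⟨(mem_maximalSets.1 hW).1, ?_⟩
    rintro ⟨hxW, hyW⟩
    exact hWX (hu W hW hxW hyW)
  -- characterization of maximal sets of F'
  have hchar : ∀ M ∈ maximalSets F', M = X.erase x ∨ M = X.erase y ∨
      (M ∈ maximalSets F ∧ M ≠ X) := by
    intro M hM
    have hMF' : M ∈ F' := (mem_maximalSets.1 hM).1
    have hMmax' := (mem_maximalSets.1 hM).2
    have hMF : M ∈ F := (Finset.mem_filter.1 hMF').1
    have hMxy : ¬(x ∈ M ∧ y ∈ M) := (Finset.mem_filter.1 hMF').2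
    obtain ⟨W, hW, hMW⟩ := exists_maximal_superset F hMF
    by_cases hWX : W = X
    · subst hWX
      by_cases hxM : x ∈ M
      · have hyM : y ∉ M := fun h => hMxy ⟨hxM, h⟩
        refine Or.inr (Or.inl (hMmax' _ hXy ?_))
        intro a ha
        exact Finset.mem_erase.2 ⟨fun h => hyM (h ▸ ha), hMW ha⟩
      · refine Or.inl (hMmax' _ hXx ?_)
        intro a ha
        exact Finset.mem_erase.2 ⟨fun h => hxM (h ▸ ha), hMW ha⟩
    · have hWF' : W ∈ F' := hmaxF' W hW hWX
      have hMeq : M = W := hMmax' W hWF' hMW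
      exact Or.inr (Or.inr ⟨by rw [hMeq]; exact hW, fun h => hWX (hMeq.symm.trans h)⟩)
  obtain ⟨G, hT⟩ := hF
  set r : {Z // Z ∈ maximalSets F} := ⟨X, hX⟩ with hrdef
  obtain ⟨par, μ, hpar, hripD⟩ := decomposable_parstruct hT r
  -- vertices of the new structure
  set V₂ := ({Z // Z ∈ maximalSets F} ⊕ Unit) with hV₂
  set root₂ : V₂ := Sum.inl r with hroot₂
  set par₂ : V₂ → V₂ := fun w => match w with
    | Sum.inl v => if par v = r ∧ x ∈ v.1 then Sum.inr () else Sum.inl (par v)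
    | Sum.inr _ => Sum.inl r
    with hpar₂
  set μ₂ : V₂ → ℕ := fun w => match w with
    | Sum.inl v => 2 * μ v + 2
    | Sum.inr _ => 2 * μ r + 3
    with hμ₂
  set L₂ : V₂ → Finset A := fun w => match w with
    | Sum.inl v => if v = r then X.erase x else v.1
    | Sum.inr _ => X.erase y
    with hL₂
  have hvne : ∀ v : {Z // Z ∈ maximalSets F}, v ≠ r → ¬(x ∈ v.1 ∧ y ∈ v.1) := by
    rintro v hv ⟨h1, h2⟩
    exact hv (Subtype.ext (hu v.1 v.2 h1 h2))
  apply jstruct_decomposable F' (Fintype.card V₂) (V := V₂) root₂ par₂ μ₂ L₂ le_rfl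
  · -- hpar₂
    rintro (v | u) hne
    · have hvr : v ≠ r := fun h => hne (by rw [hroot₂, h])
      rw [hpar₂, hμ₂]
      dsimp only
      have := hpar v hvr
      split_ifs with hc
      · rw [hc.1] at this
        show 2 * μ r + 3 < 2 * μ v + 2
        omega
      · show 2 * μ (par v) + 2 < 2 * μ v + 2
        omega
    · show 2 * μ r + 2 < 2 * μ r + 3
      omega
  · -- hlab₂
    rintro (v | u)
    · rw [hL₂]
      dsimp only
      split_ifs with hc
      · exact hXx
      · exact Finset.mem_filter.2 ⟨(mem_maximalSets.1 v.2).1, hvne v hc⟩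
    · exact hXy
  · -- hcover₂
    intro M hM
    rcases hchar M hM with h | h | ⟨hMF, hMX⟩
    · exact ⟨Sum.inl r, by rw [hL₂]; simp [h]⟩
    · exact ⟨Sum.inr (), by rw [hL₂]; simp [h]⟩
    · refine ⟨Sum.inl ⟨M, hMF⟩, ?_⟩
      rw [hL₂]
      dsimp only
      rw [if_neg (fun h => hMX (congrArg Subtype.val h))]
  · -- hrip₂
    intro a
    obtain ⟨ma, hma⟩ := hripD a
    have hmar_of : a ∈ X → ma = r := by
      intro haX
      by_contra h
      exact (hma r haX (fun he => h he.symm)).1 rfl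
    by_cases hax : a = x
    · subst hax
      refine ⟨Sum.inr (), ?_⟩
      rintro (v | u) haj hjm
      · have hvr : v ≠ r := by
          intro h
          rw [hL₂] at haj
          dsimp only at haj
          rw [if_pos h] at haj
          exact (Finset.mem_erase.1 haj).1 rfl
        have haj' : a ∈ v.1 := by
          rw [hL₂] at haj; dsimp only at haj; rwa [if_neg hvr] at haj
        refine ⟨fun h => hvr (by injection h), ?_⟩
        have hmar : ma = r := hmar_of hx
        obtain ⟨-, hpav⟩ := hma v haj' (fun h => hvr (h.trans hmar))
        rw [hpar₂, hL₂]
        dsimp only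
        by_cases hc : par v = r ∧ a ∈ v.1
        · rw [if_pos hc]
          exact Finset.mem_erase.2 ⟨hxy, hx⟩
        · rw [if_neg hc]
          have hpvr : par v ≠ r := fun h => hc ⟨h, haj'⟩
          dsimp only
          rw [if_neg hpvr]
          exact hpav
      · exact absurd rfl hjm
    · by_cases haX : a ∈ X
      · refine ⟨Sum.inl r, ?_⟩
        rintro (v | u) haj hjm
        · have hvr : v ≠ r := fun h => hjm (by rw [h])
          have haj' : a ∈ v.1 := by
            rw [hL₂] at haj; dsimp only at haj; rwa [if_neg hvr] at haj
          have hmar : ma = r := hmar_of haX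
          obtain ⟨-, hpav⟩ := hma v haj' (fun h => hvr (h.trans hmar))
          refine ⟨fun h => hvr (by injection h), ?_⟩
          rw [hpar₂, hL₂]
          dsimp only
          by_cases hc : par v = r ∧ x ∈ v.1
          · rw [if_pos hc]
            refine Finset.mem_erase.2 ⟨?_, haX⟩
            intro hay
            exact hvr (Subtype.ext (hu v.1 v.2 hc.2 (hay ▸ haj')))
          · rw [if_neg hc]
            dsimp only
            by_cases hpvr : par v = r
            · rw [if_pos hpvr]
              exact Finset.mem_erase.2 ⟨hax, haX⟩
            · rw [if_neg hpvr]
              exact hpav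
        · refine ⟨fun h => by injection h, ?_⟩
          rw [hpar₂, hL₂]
          dsimp only
          rw [if_pos rfl]
          exact Finset.mem_erase.2 ⟨hax, haX⟩
      · refine ⟨Sum.inl ma, ?_⟩
        rintro (v | u) haj hjm
        · have hvr : v ≠ r := by
            intro h
            rw [hL₂] at haj
            dsimp only at haj
            rw [if_pos h] at haj
            exact haX (Finset.mem_of_mem_erase haj)
          have haj' : a ∈ v.1 := by
            rw [hL₂] at haj; dsimp only at haj; rwa [if_neg hvr] at haj
          have hvma : v ≠ ma := fun h => hjm (by rw [h])
          obtain ⟨-, hpav⟩ := hma v haj' hvma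
          refine ⟨fun h => hvr (by injection h), ?_⟩
          rw [hpar₂, hL₂]
          dsimp only
          have hpvr : par v ≠ r := by
            intro h
            rw [h] at hpav
            exact haX hpav
          rw [if_neg (fun hc => hpvr (hc : par v = r ∧ x ∈ v.1).1)]
          dsimp only
          rw [if_neg hpvr]
          exact hpav
        · rw [hL₂] at haj
          dsimp only at haj
          exact absurd (Finset.mem_of_mem_erase haj) haX

end backward


end SplitTool

/-- Theorem (split legality): for a decomposable family `F`, a maximal itemset `X` and
distinct `x, y ∈ X`, the family obtained by the split operation `split(X,x,y)` (deleting
every itemset containing both `x` and `y`) is decomposable if and only if `X` is the only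
maximal itemset of `F` containing both `x` and `y`. -/
theorem split_legal (F : Finset (Finset A)) (hdc : DownwardClosed F) (hF : Decomposable F)
    (X : Finset A) (hX : X ∈ maximalSets F) (x y : A)
    (hx : x ∈ X) (hy : y ∈ X) (hxy : x ≠ y) :
    Decomposable (F.filter fun Z => ¬(x ∈ Z ∧ y ∈ Z)) ↔
      ∀ Y ∈ maximalSets F, x ∈ Y → y ∈ Y → Y = X := by
  constructor
  · exact SplitTool.forward hdc hF hX hx hy hxy
  · exact SplitTool.backward hdc hF hX hx hy hxy
end

section
/- Any decomposable family of itemsets can be transformed into the family consisting of all singletons (the independence model) by a finite sequence of legal split operations. Consequently, since split(S∪{x,y}, x, y) and merge(S, x, y) are mutually inverse operations, any decomposable family can be reached from any other decomposable family by a finite sequence of legal split and merge operations. -/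
open scoped Classical

variable {A : Type*} [Fintype A] [DecidableEq A]

/-- A legal split step: `G` is obtained from `F` by a split `split(X,x,y)` where `X` is
the unique maximal itemset of `F` containing both `x` and `y`. -/
def LegalSplitStep (F G : Finset (Finset A)) : Prop :=
  ∃ X ∈ maximalSets F, ∃ x ∈ X, ∃ y ∈ X, x ≠ y ∧
    (∀ Y ∈ maximalSets F, x ∈ Y → y ∈ Y → Y = X) ∧
    G = F.filter fun Z => ¬(x ∈ Z ∧ y ∈ Z)

/-- A legal merge step: `G` is obtained from `F` by adding `S ∪ {x,y}` and all its
subsets, the result being decomposable. -/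
def LegalMergeStep (F G : Finset (Finset A)) : Prop :=
  ∃ S : Finset A, ∃ x : A, ∃ y : A, x ∉ S ∧ y ∉ S ∧ x ≠ y ∧
    G = F ∪ (insert x (insert y S)).powerset ∧ Decomposable G

/-- The family of the independence model: the empty itemset and all singletons. -/
def indepFam (A : Type*) [Fintype A] [DecidableEq A] : Finset (Finset A) :=
  insert ∅ (Finset.univ.image fun a : A => ({a} : Finset A))

lemma mem_maximalSets' {Fam : Finset (Finset A)} {X : Finset A} :
    X ∈ maximalSets Fam ↔ X ∈ Fam ∧ ∀ Y ∈ Fam, X ⊆ Y → X = Y := by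
  simp [maximalSets]

lemma maximalSets_subset {Fam : Finset (Finset A)} : maximalSets Fam ⊆ Fam :=
  Finset.filter_subset _ _

lemma exists_maximal_superset {Fam : Finset (Finset A)} {Z : Finset A} (hZ : Z ∈ Fam) :
    ∃ W ∈ maximalSets Fam, Z ⊆ W := by
  classical
  have hne : (Fam.filter fun W => Z ⊆ W).Nonempty := ⟨Z, by simp [hZ]⟩
  obtain ⟨W, hW, hmax⟩ := Finset.exists_max_image _ (fun W => W.card) hne
  simp only [Finset.mem_filter] at hW
  refine ⟨W, mem_maximalSets'.2 ⟨hW.1, ?_⟩, hW.2⟩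
  intro Y hY hWY
  exact Finset.eq_of_subset_of_card_le hWY (hmax Y (by simp [hY, hW.2.trans hWY]))

/-- walk-form of RIP -/
lemma junction_walkRIP {Fam : Finset (Finset A)} {G : SimpleGraph {X // X ∈ maximalSets Fam}}
    (h : IsJunctionTree Fam G) :
    ∀ (u v : {X // X ∈ maximalSets Fam}) (a : A), a ∈ u.1 → a ∈ v.1 →
      ∃ w : G.Walk u v, ∀ Z ∈ w.support, a ∈ Z.1 := by
  intro u v a hu hv
  obtain ⟨w⟩ := h.1.isConnected u v
  exact ⟨w.toPath.1, fun Z hZ => h.2 u v a hu hv _ w.toPath.2 Z hZ⟩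

lemma walkRIP_junction {Fam : Finset (Finset A)} {G : SimpleGraph {X // X ∈ maximalSets Fam}}
    (ht : G.IsTree)
    (h : ∀ (u v : {X // X ∈ maximalSets Fam}) (a : A), a ∈ u.1 → a ∈ v.1 →
      ∃ w : G.Walk u v, ∀ Z ∈ w.support, a ∈ Z.1) : IsJunctionTree Fam G := by
  refine ⟨ht, fun u v a hu hv p hp Z hZ => ?_⟩
  obtain ⟨w, hw⟩ := h u v a hu hv
  have : (⟨p, hp⟩ : G.Path u v) = w.toPath := ht.IsAcyclic.path_unique _ _
  have hsub : p.support ⊆ w.support := by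
    have : p = w.toPath.1 := congrArg Subtype.val this
    rw [this]
    exact SimpleGraph.Walk.support_bypass_subset _
  exact hw Z (hsub hZ)


open SimpleGraph Walk
section Surgery

variable {V V' : Type*} (T : SimpleGraph V) (τ : V → V') (ℓ : V') (L Y₀ : V)

/-- Graph obtained from `T` by mapping vertices along `τ` (which may identify `L` and `Y₀`)
and attaching a pendant vertex `ℓ` to `τ L`. -/
def surgeryGraph : SimpleGraph V' where
  Adj P Q := P ≠ Q ∧ ((∃ U W, T.Adj U W ∧ τ U = P ∧ τ W = Q) ∨
    (P = ℓ ∧ Q = τ L) ∨ (Q = ℓ ∧ P = τ L))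
  symm := by
    refine ⟨?_⟩
    rintro P Q ⟨hne, ⟨U, W, h1, h2, h3⟩ | h | h⟩
    · exact ⟨hne.symm, Or.inl ⟨W, U, h1.symm, h3, h2⟩⟩
    · exact ⟨hne.symm, Or.inr (Or.inr h)⟩
    · exact ⟨hne.symm, Or.inr (Or.inl h)⟩
  loopless := ⟨fun P h => h.1 rfl⟩

variable {T τ ℓ L Y₀}

/-- lifting T-walks to H-walks -/
lemma surgery_lift {U W : V} (w : T.Walk U W) :
    ∃ w' : (surgeryGraph T τ ℓ L).Walk (τ U) (τ W),
      ∀ Z ∈ w'.support, ∃ R ∈ w.support, τ R = Z := by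
  induction w with
  | nil => exact ⟨Walk.nil, by simp⟩
  | @cons a b c h w ih =>
    obtain ⟨w', hw'⟩ := ih
    by_cases hEq : τ a = τ b
    · refine ⟨w'.copy hEq.symm rfl, ?_⟩
      intro Z hZ
      rw [Walk.support_copy] at hZ
      obtain ⟨R, hR, hRZ⟩ := hw' Z hZ
      exact ⟨R, by simp [hR], hRZ⟩
    · refine ⟨Walk.cons (show (surgeryGraph T τ ℓ L).Adj (τ a) (τ b) from ⟨hEq, Or.inl ⟨a, b, h, rfl, rfl⟩⟩) w', ?_⟩
      intro Z hZ
      rw [Walk.support_cons] at hZ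
      rcases List.mem_cons.1 hZ with rfl | hZ
      · exact ⟨a, by simp, rfl⟩
      · obtain ⟨R, hR, hRZ⟩ := hw' Z hZ
        exact ⟨R, by simp [hR], hRZ⟩

noncomputable def surgeryInv : V' → V := fun P =>
  if h : ∃ U, τ U = P then h.choose else L

lemma surgeryInv_spec (hsurj : ∀ P, P ≠ ℓ → ∃ U, τ U = P) {P : V'} (h : P ≠ ℓ) :
    τ (surgeryInv (τ := τ) (L := L) P) = P := by
  obtain ⟨U, hU⟩ := hsurj P h
  rw [surgeryInv, dif_pos ⟨U, hU⟩]
  exact (⟨U, hU⟩ : ∃ U, τ U = P).choose_spec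

lemma surgeryInv_not_LY (hglue : τ L = τ Y₀) (hsurj : ∀ P, P ≠ ℓ → ∃ U, τ U = P)
    {P : V'} (hP : P ≠ ℓ) (hPβ : P ≠ τ L) :
    surgeryInv (τ := τ) (L := L) P ≠ L ∧ surgeryInv (τ := τ) (L := L) P ≠ Y₀ := by
  constructor
  · intro h
    exact hPβ (by rw [← surgeryInv_spec hsurj hP, h])
  · intro h
    exact hPβ (by rw [← surgeryInv_spec hsurj hP, h, ← hglue])

lemma surgeryInv_eq (hglue : τ L = τ Y₀) (hsurj : ∀ P, P ≠ ℓ → ∃ U, τ U = P)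
    (hinj : ∀ U W, τ U = τ W → U = W ∨ (U = L ∧ W = Y₀) ∨ (U = Y₀ ∧ W = L))
    {U : V} (hP : τ U ≠ ℓ) (hPβ : τ U ≠ τ L) :
    surgeryInv (τ := τ) (L := L) (τ U) = U := by
  rcases hinj _ _ (surgeryInv_spec hsurj hP) with h | ⟨h1, h2⟩ | ⟨h1, h2⟩
  · exact h
  · exact absurd (by rw [h2, ← hglue]) hPβ
  · exfalso
    apply hPβ
    rw [← surgeryInv_spec hsurj hP, h1, ← hglue]

/-- edge analysis away from `ℓ` and `β` -/
lemma surgery_edge (hglue : τ L = τ Y₀) (hsurj : ∀ P, P ≠ ℓ → ∃ U, τ U = P)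
    (hinj : ∀ U W, τ U = τ W → U = W ∨ (U = L ∧ W = Y₀) ∨ (U = Y₀ ∧ W = L))
    {P Q : V'} (h : (surgeryGraph T τ ℓ L).Adj P Q) (hP : P ≠ ℓ) (hQ : Q ≠ ℓ)
    (hPβ : P ≠ τ L) (hQβ : Q ≠ τ L) :
    T.Adj (surgeryInv (τ := τ) (L := L) P) (surgeryInv (τ := τ) (L := L) Q) := by
  obtain ⟨hne, ⟨U, W, hUW, rfl, rfl⟩ | ⟨rfl, _⟩ | ⟨rfl, _⟩⟩ := h
  · rw [surgeryInv_eq hglue hsurj hinj hP hPβ, surgeryInv_eq hglue hsurj hinj hQ hQβ]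
    exact hUW
  · exact absurd rfl hP
  · exact absurd rfl hQ

/-- edge analysis at `β` -/
lemma surgery_edge_beta (hglue : τ L = τ Y₀) (hτℓ : ∀ U, τ U ≠ ℓ)
    (hsurj : ∀ P, P ≠ ℓ → ∃ U, τ U = P)
    (hinj : ∀ U W, τ U = τ W → U = W ∨ (U = L ∧ W = Y₀) ∨ (U = Y₀ ∧ W = L))
    {P : V'} (h : (surgeryGraph T τ ℓ L).Adj (τ L) P) (hP : P ≠ ℓ) (hPβ : P ≠ τ L) :
    T.Adj L (surgeryInv (τ := τ) (L := L) P) ∨ T.Adj Y₀ (surgeryInv (τ := τ) (L := L) P) := by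
  obtain ⟨hne, ⟨U, W, hUW, hU, hW⟩ | ⟨h1, _⟩ | ⟨h1, h2⟩⟩ := h
  · have hWinv : surgeryInv (τ := τ) (L := L) P = W := by
      rw [← hW]
      exact surgeryInv_eq hglue hsurj hinj (hW ▸ hP) (hW ▸ hPβ)
    rw [hWinv]
    rcases hinj U L hU with h | ⟨h1, h2⟩ | ⟨h1, h2⟩
    · exact Or.inl (h ▸ hUW)
    · exact Or.inl (h1 ▸ hUW)
    · exact Or.inr (h1 ▸ hUW)
  · exact absurd h1 (hτℓ L)
  · exact absurd h1 hP

/-- projecting H-walks avoiding `ℓ` and `β` down to T-walks -/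
lemma surgery_project (hglue : τ L = τ Y₀) (hsurj : ∀ P, P ≠ ℓ → ∃ U, τ U = P)
    (hinj : ∀ U W, τ U = τ W → U = W ∨ (U = L ∧ W = Y₀) ∨ (U = Y₀ ∧ W = L))
    {P Q : V'} (w : (surgeryGraph T τ ℓ L).Walk P Q)
    (hsupp : ∀ R ∈ w.support, R ≠ ℓ ∧ R ≠ τ L) :
    ∃ w' : T.Walk (surgeryInv (τ := τ) (L := L) P) (surgeryInv (τ := τ) (L := L) Q),
      w'.support = w.support.map (surgeryInv (τ := τ) (L := L)) ∧ w'.length = w.length := by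
  induction w with
  | nil => exact ⟨SimpleGraph.Walk.nil, by simp, rfl⟩
  | @cons a b c h w ih =>
    have ha := hsupp a (by simp)
    have hb := hsupp b (by simp)
    obtain ⟨w', hw's, hw'l⟩ := ih (fun R hR => hsupp R (by simp [hR]))
    refine ⟨SimpleGraph.Walk.cons (surgery_edge hglue hsurj hinj h ha.1 hb.1 ha.2 hb.2) w', ?_, ?_⟩
    · simp [hw's]
    · simp [hw'l]

lemma surgery_leaf_adj (hτℓ : ∀ U, τ U ≠ ℓ) {Q : V'}
    (h : (surgeryGraph T τ ℓ L).Adj ℓ Q) : Q = τ L := by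
  obtain ⟨hne, ⟨U, W, hUW, hU, hW⟩ | ⟨_, h2⟩ | ⟨h1, h2⟩⟩ := h
  · exact absurd hU (hτℓ U)
  · exact h2
  · exact absurd h2.symm (hτℓ L)

lemma surgery_ell_ne_beta (hτℓ : ∀ U, τ U ≠ ℓ) : ℓ ≠ τ L := fun h => hτℓ L h.symm

lemma surgery_no_cycle_at_ell (hτℓ : ∀ U, τ U ≠ ℓ)
    (c : (surgeryGraph T τ ℓ L).Walk ℓ ℓ) : ¬ c.IsCycle := by
  intro hc
  have h3 := hc.three_le_length
  cases c with
  | nil => exact hc.ne_nil rfl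
  | @cons _ b _ h₁ q =>
    have hb : b = τ L := surgery_leaf_adj hτℓ h₁
    subst hb
    rw [SimpleGraph.Walk.cons_isCycle_iff] at hc
    have hrev : q.reverse.IsPath := hc.1.reverse
    obtain ⟨Pk, h₂, q₂, hq₂⟩ :=
      SimpleGraph.Walk.exists_eq_cons_of_ne (surgery_ell_ne_beta hτℓ) q.reverse
    have hPk : Pk = τ L := surgery_leaf_adj hτℓ h₂
    subst hPk
    rw [hq₂, SimpleGraph.Walk.cons_isPath_iff] at hrev
    -- q₂ is a path from β to β, hence nil
    have hnil : q₂.length = 0 := by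
      cases q₂ with
      | nil => rfl
      | cons h₃ q₃ =>
        exfalso
        have := hrev.1
        rw [SimpleGraph.Walk.cons_isPath_iff] at this
        exact this.2 (SimpleGraph.Walk.end_mem_support _)
    have hql : q.length = 1 := by
      have := congrArg SimpleGraph.Walk.length hq₂
      rw [SimpleGraph.Walk.length_reverse] at this
      simp [hnil] at this
      omega
    simp only [SimpleGraph.Walk.length_cons, hql] at h3
    omega

lemma rotate_support_subset {W : Type*} {G : SimpleGraph W} [DecidableEq W] {u v : W}
    (c : G.Walk v v) (h : u ∈ c.support) : (c.rotate _ h).support ⊆ c.support := by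
  intro z hz
  rw [SimpleGraph.Walk.rotate, SimpleGraph.Walk.mem_support_append_iff] at hz
  rcases hz with h1 | h1
  · exact SimpleGraph.Walk.support_dropUntil_subset _ _ h1
  · exact SimpleGraph.Walk.support_takeUntil_subset _ _ h1

lemma tree_two_paths (hT : T.IsTree) {a b U₁ U₂ : V} (m : T.Walk b a) (hm : m.IsPath)
    (t₁ : T.Adj U₁ a) (t₂ : T.Adj U₂ b)
    (hU₁m : U₁ ∉ m.support) (hU₂m : U₂ ∉ m.support) (hmlen : 1 ≤ m.length)
    (hU₁a : U₁ ≠ a) (hU₂a : U₂ ≠ a)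
    (hU : U₁ = U₂ ∨ T.Adj U₂ U₁) : False := by
  rcases hU with rfl | hadj
  · have hp₂ : (SimpleGraph.Walk.cons t₂ m).IsPath :=
      SimpleGraph.Walk.IsPath.cons hm hU₁m
    have := hT.IsAcyclic.path_unique (SimpleGraph.Path.singleton t₁) ⟨_, hp₂⟩
    have hlen := congrArg (fun p : T.Path U₁ a => p.1.length) this
    simp [SimpleGraph.Path.singleton] at hlen
    rw [SimpleGraph.Walk.nil_iff_length_eq] at hlen
    omega
  · have hp₁ : (SimpleGraph.Walk.cons hadj (SimpleGraph.Walk.cons t₁ SimpleGraph.Walk.nil)).IsPath := by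
      simp [SimpleGraph.Walk.isPath_def]
      exact ⟨⟨hadj.ne, hU₂a⟩, hU₁a⟩
    have hp₂ : (SimpleGraph.Walk.cons t₂ m).IsPath :=
      SimpleGraph.Walk.IsPath.cons hm hU₂m
    have := hT.IsAcyclic.path_unique ⟨_, hp₁⟩ ⟨_, hp₂⟩
    have hsupp := congrArg (fun p : T.Path U₂ a => U₁ ∈ p.1.support) this
    simp only [eq_iff_iff] at hsupp
    have hmem : U₁ ∈ (SimpleGraph.Walk.cons t₂ m).support := by
      rw [← hsupp]
      simp
    rw [SimpleGraph.Walk.support_cons] at hmem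
    rcases List.mem_cons.1 hmem with h | h
    · exact hadj.ne' h
    · exact hU₁m h

lemma surgery_isAcyclic (hT : T.IsTree) (hLY : L = Y₀ ∨ T.Adj L Y₀) (hglue : τ L = τ Y₀)
    (hτℓ : ∀ U, τ U ≠ ℓ) (hsurj : ∀ P, P ≠ ℓ → ∃ U, τ U = P)
    (hinj : ∀ U W, τ U = τ W → U = W ∨ (U = L ∧ W = Y₀) ∨ (U = Y₀ ∧ W = L)) :
    (surgeryGraph T τ ℓ L).IsAcyclic := by
  intro v c hc
  have hcell : ℓ ∉ c.support := by
    intro hmem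
    exact surgery_no_cycle_at_ell hτℓ (c.rotate _ hmem) (hc.rotate hmem)
  by_cases hβ : τ L ∈ c.support
  · -- rotate the cycle to start at β
    have hc₁ := hc.rotate hβ
    have hsupp₁ : ∀ z ∈ (c.rotate _ hβ).support, z ≠ ℓ := by
      intro z hz h
      subst h
      exact hcell (rotate_support_subset c hβ hz)
    revert hc₁ hsupp₁
    generalize (c.rotate _ hβ) = c₁
    intro hc₁ hsupp₁
    have h3 := hc₁.three_le_length
    cases c₁ with
    | nil => exact hc₁.ne_nil rfl
    | @cons _ P₁ _ h₁ q =>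
      rw [SimpleGraph.Walk.cons_isCycle_iff] at hc₁
      have hP₁β : P₁ ≠ τ L := h₁.ne'
      have hP₁ℓ : P₁ ≠ ℓ := hsupp₁ P₁ (by simp)
      obtain ⟨Pk, h₂, q₂, hq₂⟩ :=
        SimpleGraph.Walk.exists_eq_cons_of_ne (Ne.symm hP₁β) q.reverse
      have hrev : q.reverse.IsPath := hc₁.1.reverse
      rw [hq₂, SimpleGraph.Walk.cons_isPath_iff] at hrev
      obtain ⟨hq₂p, hβq₂⟩ := hrev
      have hq₂supp : ∀ R ∈ q₂.support, R ≠ ℓ ∧ R ≠ τ L := by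
        intro R hR
        have hRq : R ∈ q.support := by
          have : R ∈ q.reverse.support := by rw [hq₂]; simp [hR]
          rwa [SimpleGraph.Walk.support_reverse, List.mem_reverse] at this
        exact ⟨hsupp₁ R (by simp [hRq]), fun h => hβq₂ (h ▸ hR)⟩
      obtain ⟨m, hms, hml⟩ := surgery_project hglue hsurj hinj q₂ hq₂supp
      have hmp : m.IsPath := by
        rw [SimpleGraph.Walk.isPath_def, hms]
        exact List.Nodup.map_on
          (fun x hx y hy hxy => by
            rw [← surgeryInv_spec hsurj (hq₂supp x hx).1,
              ← surgeryInv_spec hsurj (hq₂supp y hy).1, hxy])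
          hq₂p.support_nodup
      have hnotLY : ∀ Z ∈ m.support, Z ≠ L ∧ Z ≠ Y₀ := by
        intro Z hZ
        rw [hms] at hZ
        obtain ⟨R, hR, rfl⟩ := List.mem_map.1 hZ
        exact surgeryInv_not_LY hglue hsurj (hq₂supp R hR).1 (hq₂supp R hR).2
      have hPkℓ : Pk ≠ ℓ := (hq₂supp Pk (SimpleGraph.Walk.start_mem_support _)).1
      have hPkβ : Pk ≠ τ L := h₂.ne'
      have e₁ := surgery_edge_beta hglue hτℓ hsurj hinj h₁ hP₁ℓ hP₁β
      have e₂ := surgery_edge_beta hglue hτℓ hsurj hinj h₂ hPkℓ hPkβ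
      have hmlen : 1 ≤ m.length := by
        have hq₂l : q.length = q₂.length + 1 := by
          have := congrArg SimpleGraph.Walk.length hq₂
          rwa [SimpleGraph.Walk.length_reverse, SimpleGraph.Walk.length_cons] at this
        simp only [SimpleGraph.Walk.length_cons] at h3
        omega
      have ha' := surgeryInv_not_LY hglue hsurj hP₁ℓ hP₁β
      have hb' := surgeryInv_not_LY hglue hsurj hPkℓ hPkβ
      have hLm : L ∉ m.support := fun h => (hnotLY L h).1 rfl
      have hYm : Y₀ ∉ m.support := fun h => (hnotLY Y₀ h).2 rfl
      rcases e₁ with t₁ | t₁ <;> rcases e₂ with t₂ | t₂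
      · exact tree_two_paths hT m hmp t₁ t₂ hLm hLm hmlen (Ne.symm ha'.1) (Ne.symm ha'.1)
          (Or.inl rfl)
      · rcases hLY with rfl | hadj
        · exact tree_two_paths hT m hmp t₁ t₂ hLm hLm hmlen (Ne.symm ha'.1) (Ne.symm ha'.1)
            (Or.inl rfl)
        · exact tree_two_paths hT m hmp t₁ t₂ hLm hYm hmlen (Ne.symm ha'.1) (Ne.symm ha'.2)
            (Or.inr hadj.symm)
      · rcases hLY with rfl | hadj
        · exact tree_two_paths hT m hmp t₁ t₂ hYm hYm hmlen (Ne.symm ha'.2) (Ne.symm ha'.1)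
            (Or.inl rfl)
        · exact tree_two_paths hT m hmp t₁ t₂ hYm hLm hmlen (Ne.symm ha'.2) (Ne.symm ha'.1)
            (Or.inr hadj)
      · exact tree_two_paths hT m hmp t₁ t₂ hYm hYm hmlen (Ne.symm ha'.2) (Ne.symm ha'.2)
          (Or.inl rfl)
  · -- cycle avoiding β and ℓ entirely
    have h3 := hc.three_le_length
    cases c with
    | nil => exact hc.ne_nil rfl
    | @cons _ P₁ _ h₁ q =>
      rw [SimpleGraph.Walk.cons_isCycle_iff] at hc
      have hqsupp : ∀ R ∈ q.support, R ≠ ℓ ∧ R ≠ τ L := by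
        intro R hR
        constructor
        · intro h; subst h; exact hcell (by simp [hR])
        · intro h; subst h; exact hβ (by simp [hR])
      have hvℓ : v ≠ ℓ := (hqsupp v (SimpleGraph.Walk.end_mem_support q)).1
      have hvβ : v ≠ τ L := (hqsupp v (SimpleGraph.Walk.end_mem_support q)).2
      obtain ⟨m, hms, hml⟩ := surgery_project hglue hsurj hinj q hqsupp
      have hmp : m.IsPath := by
        rw [SimpleGraph.Walk.isPath_def, hms]
        exact List.Nodup.map_on
          (fun x hx y hy hxy => by
            rw [← surgeryInv_spec hsurj (hqsupp x hx).1,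
              ← surgeryInv_spec hsurj (hqsupp y hy).1, hxy])
          hc.1.support_nodup
      have hP₁ℓ : P₁ ≠ ℓ := (hqsupp P₁ (SimpleGraph.Walk.start_mem_support _)).1
      have hP₁β : P₁ ≠ τ L := (hqsupp P₁ (SimpleGraph.Walk.start_mem_support _)).2
      have t := surgery_edge hglue hsurj hinj h₁ hvℓ hP₁ℓ hvβ hP₁β
      have := hT.IsAcyclic.path_unique (SimpleGraph.Path.singleton t) ⟨m.reverse, hmp.reverse⟩
      have hlen := congrArg (fun p : T.Path _ _ => p.1.length) this
      simp [SimpleGraph.Path.singleton, SimpleGraph.Walk.length_reverse, hml] at hlen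
      simp only [SimpleGraph.Walk.length_cons] at h3
      omega

lemma surgery_connected (hT : T.IsTree) (hτℓ : ∀ U, τ U ≠ ℓ)
    (hsurj : ∀ P, P ≠ ℓ → ∃ U, τ U = P) :
    (surgeryGraph T τ ℓ L).Connected := by
  have hreach : ∀ P : V', (surgeryGraph T τ ℓ L).Reachable P (τ L) := by
    intro P
    by_cases hP : P = ℓ
    · subst hP
      exact SimpleGraph.Adj.reachable
        ⟨surgery_ell_ne_beta hτℓ, Or.inr (Or.inl ⟨rfl, rfl⟩)⟩
    · obtain ⟨U, rfl⟩ := hsurj P hP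
      obtain ⟨w⟩ := hT.isConnected U L
      obtain ⟨w', _⟩ := surgery_lift (ℓ := ℓ) w
      exact ⟨w'⟩
  have : Nonempty V' := ⟨ℓ⟩
  exact SimpleGraph.Connected.mk fun P Q => (hreach P).trans (hreach Q).symm

lemma surgery_isTree (hT : T.IsTree) (hLY : L = Y₀ ∨ T.Adj L Y₀) (hglue : τ L = τ Y₀)
    (hτℓ : ∀ U, τ U ≠ ℓ) (hsurj : ∀ P, P ≠ ℓ → ∃ U, τ U = P)
    (hinj : ∀ U W, τ U = τ W → U = W ∨ (U = L ∧ W = Y₀) ∨ (U = Y₀ ∧ W = L)) :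
    (surgeryGraph T τ ℓ L).IsTree :=
  ⟨surgery_connected hT hτℓ hsurj, surgery_isAcyclic hT hLY hglue hτℓ hsurj hinj⟩

end Surgery


section SplitSection
open SimpleGraph
variable {A : Type*} [Fintype A] [DecidableEq A]
variable {F : Finset (Finset A)} {L : Finset A} {x y : A}

lemma mem_split {Z : Finset A} :
    Z ∈ F.filter (fun Z => ¬(x ∈ Z ∧ y ∈ Z)) ↔ Z ∈ F ∧ ¬(x ∈ Z ∧ y ∈ Z) :=
  Finset.mem_filter

lemma priv_not_mem (hpriv : ∀ Y ∈ maximalSets F, x ∈ Y → Y = L)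
    {W : Finset A} (hW : W ∈ maximalSets F) (hWL : W ≠ L) : x ∉ W :=
  fun h => hWL (hpriv W hW h)

lemma erase_not_maximal (hL : L ∈ maximalSets F) {z : A} (hz : z ∈ L)
    {W : Finset A} (hW : W ∈ maximalSets F) : W ≠ L.erase z := by
  rintro rfl
  have h1 : L.erase z ⊆ L := Finset.erase_subset _ _
  have := (mem_maximalSets'.1 hW).2 L (maximalSets_subset hL) h1
  exact (Finset.erase_ne_self.2 hz) this

lemma erase_y_maximal (hdc : DownwardClosed F) (hL : L ∈ maximalSets F)
    (hx : x ∈ L) (hy : y ∈ L) (hxy : x ≠ y)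
    (hpriv : ∀ Y ∈ maximalSets F, x ∈ Y → Y = L) :
    L.erase y ∈ maximalSets (F.filter (fun Z => ¬(x ∈ Z ∧ y ∈ Z))) := by
  refine mem_maximalSets'.2 ⟨mem_split.2 ⟨hdc L (maximalSets_subset hL) _ (Finset.erase_subset _ _),
    fun h => (Finset.notMem_erase y L) h.2⟩, ?_⟩
  intro Z hZ hsub
  obtain ⟨hZF, hZxy⟩ := mem_split.1 hZ
  have hxZ : x ∈ Z := hsub (Finset.mem_erase.2 ⟨hxy, hx⟩)
  have hyZ : y ∉ Z := fun h => hZxy ⟨hxZ, h⟩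
  obtain ⟨W, hW, hZW⟩ := exists_maximal_superset hZF
  have hWL : W = L := hpriv W hW (hZW hxZ)
  subst hWL
  exact Finset.Subset.antisymm hsub (fun a ha =>
    Finset.mem_erase.2 ⟨fun h => hyZ (h ▸ ha), hZW ha⟩)

lemma old_maximal (hpriv : ∀ Y ∈ maximalSets F, x ∈ Y → Y = L)
    {W : Finset A} (hW : W ∈ maximalSets F) (hWL : W ≠ L) :
    W ∈ maximalSets (F.filter (fun Z => ¬(x ∈ Z ∧ y ∈ Z))) := by
  have hxW : x ∉ W := priv_not_mem hpriv hW hWL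
  refine mem_maximalSets'.2 ⟨mem_split.2 ⟨maximalSets_subset hW, fun h => hxW h.1⟩, ?_⟩
  intro Z hZ hsub
  exact (mem_maximalSets'.1 hW).2 Z (mem_split.1 hZ).1 hsub

lemma split_classify (hdc : DownwardClosed F) (hL : L ∈ maximalSets F)
    (hx : x ∈ L) (hy : y ∈ L) (hxy : x ≠ y)
    (hpriv : ∀ Y ∈ maximalSets F, x ∈ Y → Y = L)
    {Z : Finset A} (hZ : Z ∈ maximalSets (F.filter (fun Z => ¬(x ∈ Z ∧ y ∈ Z)))) :
    Z = L.erase y ∨ Z = L.erase x ∨ (Z ∈ maximalSets F ∧ Z ≠ L) := by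
  obtain ⟨hZG, hZmax⟩ := mem_maximalSets'.1 hZ
  obtain ⟨hZF, hZxy⟩ := mem_split.1 hZG
  obtain ⟨W, hW, hZW⟩ := exists_maximal_superset hZF
  by_cases hWL : W = L
  · rw [hWL] at hZW
    by_cases hxZ : x ∈ Z
    · left
      have hyZ : y ∉ Z := fun h => hZxy ⟨hxZ, h⟩
      have hsub : Z ⊆ L.erase y := fun a ha =>
        Finset.mem_erase.2 ⟨fun h => hyZ (h ▸ ha), hZW ha⟩
      exact hZmax _ (mem_split.2 ⟨hdc L (maximalSets_subset hL) _ (Finset.erase_subset _ _),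
        fun h => (Finset.notMem_erase y L) h.2⟩) hsub
    · right; left
      have hsub : Z ⊆ L.erase x := fun a ha =>
        Finset.mem_erase.2 ⟨fun h => hxZ (h ▸ ha), hZW ha⟩
      exact hZmax _ (mem_split.2 ⟨hdc L (maximalSets_subset hL) _ (Finset.erase_subset _ _),
        fun h => (Finset.notMem_erase x L) h.1⟩) hsub
  · right; right
    have hWG : W ∈ F.filter (fun Z => ¬(x ∈ Z ∧ y ∈ Z)) :=
      mem_split.2 ⟨maximalSets_subset hW, fun h => priv_not_mem hpriv hW hWL h.1⟩
    have := hZmax W hWG hZW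
    subst this
    exact ⟨hW, hWL⟩

lemma L_not_maximal_split (hx : x ∈ L) (hy : y ∈ L) :
    L ∉ maximalSets (F.filter (fun Z => ¬(x ∈ Z ∧ y ∈ Z))) := by
  intro h
  exact (mem_split.1 (maximalSets_subset h)).2 ⟨hx, hy⟩

lemma split_RIP (hdc : DownwardClosed F) (hL : L ∈ maximalSets F)
    (hx : x ∈ L) (hy : y ∈ L) (hxy : x ≠ y)
    (hpriv : ∀ Y ∈ maximalSets F, x ∈ Y → Y = L)
    (T : SimpleGraph {Z // Z ∈ maximalSets F}) (hJT : IsJunctionTree F T)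
    (τ : {Z // Z ∈ maximalSets F} →
      {Z // Z ∈ maximalSets (F.filter (fun Z => ¬(x ∈ Z ∧ y ∈ Z)))})
    (ℓ : {Z // Z ∈ maximalSets (F.filter (fun Z => ¬(x ∈ Z ∧ y ∈ Z)))})
    (hℓval : ℓ.1 = L.erase y)
    (hτval : ∀ U, U ≠ (⟨L, hL⟩ : {Z // Z ∈ maximalSets F}) → (τ U).1 = U.1)
    (hsub : L.erase x ⊆ (τ ⟨L, hL⟩).1)
    (hex : ∀ u : {Z // Z ∈ maximalSets (F.filter (fun Z => ¬(x ∈ Z ∧ y ∈ Z)))},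
      u.1 = L.erase x → u = τ ⟨L, hL⟩)
    (hℓβ : ℓ ≠ τ ⟨L, hL⟩) :
    ∀ (u v : {Z // Z ∈ maximalSets (F.filter (fun Z => ¬(x ∈ Z ∧ y ∈ Z)))}) (a : A),
      a ∈ u.1 → a ∈ v.1 →
      ∃ w : (surgeryGraph T τ ℓ ⟨L, hL⟩).Walk u v, ∀ Z ∈ w.support, a ∈ Z.1 := by
  intro u v a hau hav
  by_cases hax : a = x
  · -- the only maximal set of G containing x is L.erase y
    have huniq : ∀ w : {Z // Z ∈ maximalSets (F.filter (fun Z => ¬(x ∈ Z ∧ y ∈ Z)))},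
        a ∈ w.1 → w = ℓ := by
      intro w hw
      have hxw : x ∈ w.1 := hax ▸ hw
      rcases split_classify hdc hL hx hy hxy hpriv w.2 with h1 | h2 | h3
      · exact Subtype.ext (h1.trans hℓval.symm)
      · exact absurd (h2 ▸ hxw) (Finset.notMem_erase x L)
      · exact absurd (hpriv w.1 h3.1 hxw) h3.2
    have hu := huniq u hau
    have hv := huniq v hav
    refine ⟨(SimpleGraph.Walk.nil : (surgeryGraph T τ ℓ ⟨L, hL⟩).Walk ℓ ℓ).copy
      hu.symm hv.symm, ?_⟩
    intro Z hZ
    rw [SimpleGraph.Walk.support_copy] at hZ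
    simp only [SimpleGraph.Walk.support_nil, List.mem_cons, List.not_mem_nil, or_false] at hZ
    subst hZ
    exact hu ▸ hau
  · -- a ≠ x; glue endpoints to τ-images and use the RIP walk in T
    have glue : ∀ w : {Z // Z ∈ maximalSets (F.filter (fun Z => ¬(x ∈ Z ∧ y ∈ Z)))},
        a ∈ w.1 → ∃ (U : {Z // Z ∈ maximalSets F})
          (ww : (surgeryGraph T τ ℓ ⟨L, hL⟩).Walk w (τ U)),
          a ∈ U.1 ∧ ∀ Z ∈ ww.support, a ∈ Z.1 := by
      intro w hw
      rcases split_classify hdc hL hx hy hxy hpriv w.2 with h1 | h2 | h3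
      · have hwℓ : w = ℓ := Subtype.ext (h1.trans hℓval.symm)
        have haL : a ∈ L := Finset.erase_subset _ _ (h1 ▸ hw)
        have haτL : a ∈ (τ ⟨L, hL⟩).1 := hsub (Finset.mem_erase.2 ⟨hax, haL⟩)
        refine ⟨⟨L, hL⟩, SimpleGraph.Walk.cons
          (show (surgeryGraph T τ ℓ ⟨L, hL⟩).Adj w (τ ⟨L, hL⟩) from ⟨by intro hh; exact hℓβ (by rw [← hwℓ]; exact hh),
            Or.inr (Or.inl ⟨hwℓ, rfl⟩)⟩) SimpleGraph.Walk.nil, haL, ?_⟩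
        intro Z hZ
        simp only [SimpleGraph.Walk.support_cons, SimpleGraph.Walk.support_nil,
          List.mem_cons, List.not_mem_nil, or_false] at hZ
        rcases hZ with rfl | hZ
        · exact hw
        · subst hZ
          exact haτL
      · have hwτ : w = τ ⟨L, hL⟩ := hex w h2
        have haL : a ∈ L := Finset.erase_subset _ _ (h2 ▸ hw)
        refine ⟨⟨L, hL⟩, (SimpleGraph.Walk.nil).copy hwτ.symm rfl, haL, ?_⟩
        intro Z hZ
        rw [SimpleGraph.Walk.support_copy] at hZ
        simp only [SimpleGraph.Walk.support_nil, List.mem_cons, List.not_mem_nil,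
          or_false] at hZ
        subst hZ
        exact hwτ ▸ hw
      · have hUvL : (⟨w.1, h3.1⟩ : {Z // Z ∈ maximalSets F}) ≠ ⟨L, hL⟩ :=
          fun h => h3.2 (congrArg Subtype.val h)
        have hwτ : w = τ ⟨w.1, h3.1⟩ := Subtype.ext (hτval _ hUvL).symm
        refine ⟨⟨w.1, h3.1⟩, (SimpleGraph.Walk.nil).copy hwτ.symm rfl, hw, ?_⟩
        intro Z hZ
        rw [SimpleGraph.Walk.support_copy] at hZ
        simp only [SimpleGraph.Walk.support_nil, List.mem_cons, List.not_mem_nil,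
          or_false] at hZ
        subst hZ
        exact hwτ ▸ hw
    obtain ⟨U₁, w₁, hU₁, hw₁⟩ := glue u hau
    obtain ⟨U₂, w₂, hU₂, hw₂⟩ := glue v hav
    obtain ⟨wm, hwm⟩ := junction_walkRIP hJT U₁ U₂ a hU₁ hU₂
    obtain ⟨wm', hwm'⟩ := surgery_lift (ℓ := ℓ) (L := (⟨L, hL⟩ : {Z // Z ∈ maximalSets F})) wm
    have hwm'a : ∀ Z ∈ wm'.support, a ∈ Z.1 := by
      intro Z hZ
      obtain ⟨R, hR, rfl⟩ := hwm' Z hZ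
      have haR : a ∈ R.1 := hwm R hR
      by_cases hRL : R = (⟨L, hL⟩ : {Z // Z ∈ maximalSets F})
      · subst hRL
        exact hsub (Finset.mem_erase.2 ⟨hax, haR⟩)
      · rw [hτval R hRL]
        exact haR
    refine ⟨w₁.append (wm'.append w₂.reverse), ?_⟩
    intro Z hZ
    rw [SimpleGraph.Walk.mem_support_append_iff] at hZ
    rcases hZ with hZ | hZ
    · exact hw₁ Z hZ
    · rw [SimpleGraph.Walk.mem_support_append_iff] at hZ
      rcases hZ with hZ | hZ
      · exact hwm'a Z hZ
      · rw [SimpleGraph.Walk.support_reverse, List.mem_reverse] at hZ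
        exact hw₂ Z hZ

lemma split_decomposable (hdc : DownwardClosed F) (hJ : Decomposable F)
    (hL : L ∈ maximalSets F) (hx : x ∈ L) (hy : y ∈ L) (hxy : x ≠ y)
    (hpriv : ∀ Y ∈ maximalSets F, x ∈ Y → Y = L) :
    Decomposable (F.filter (fun Z => ¬(x ∈ Z ∧ y ∈ Z))) := by
  classical
  obtain ⟨T, hJT⟩ := hJ
  set vL : {Z // Z ∈ maximalSets F} := ⟨L, hL⟩ with hvL
  set ℓ : {Z // Z ∈ maximalSets (F.filter (fun Z => ¬(x ∈ Z ∧ y ∈ Z)))} :=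
    ⟨L.erase y, erase_y_maximal hdc hL hx hy hxy hpriv⟩ with hℓ
  have hℓval : ℓ.1 = L.erase y := rfl
  by_cases hcase : ∃ W ∈ maximalSets F, W ≠ L ∧ L.erase x ⊆ W
  · -- Case 2: L.erase x is absorbed; contract the edge towards a neighbour containing it
    obtain ⟨W₀, hW₀, hW₀L, hW₀sub⟩ := hcase
    set vW : {Z // Z ∈ maximalSets F} := ⟨W₀, hW₀⟩ with hvW
    have hvLvW : vL ≠ vW := fun h => hW₀L (congrArg Subtype.val h).symm
    obtain ⟨w0⟩ := hJT.1.isConnected vL vW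
    obtain ⟨N, hadj, p₂, hp⟩ := SimpleGraph.Walk.exists_eq_cons_of_ne hvLvW w0.toPath.1
    have hNmem : N ∈ w0.toPath.1.support := by rw [hp]; simp
    have hsubN : L.erase x ⊆ N.1 := by
      intro a ha
      have haL : a ∈ L := Finset.erase_subset _ _ ha
      have haW : a ∈ W₀ := hW₀sub ha
      obtain ⟨wa, hwa⟩ := junction_walkRIP hJT vL vW a haL haW
      have hpq : w0.toPath = wa.toPath := hJT.1.IsAcyclic.path_unique _ _
      have : N ∈ wa.support := by
        have h1 : w0.toPath.1.support ⊆ wa.support := by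
          rw [hpq]
          exact SimpleGraph.Walk.support_bypass_subset _
        exact h1 hNmem
      exact hwa N this
    have hNvL : N ≠ vL := hadj.ne'
    have hN1L : N.1 ≠ L := fun h => hNvL (Subtype.ext h)
    set τ : {Z // Z ∈ maximalSets F} →
        {Z // Z ∈ maximalSets (F.filter (fun Z => ¬(x ∈ Z ∧ y ∈ Z)))} :=
      fun U => if h : U = vL then ⟨N.1, old_maximal hpriv N.2 hN1L⟩
        else ⟨U.1, old_maximal hpriv U.2 (fun hh => h (Subtype.ext hh))⟩ with hτ
    have hτvL : τ vL = ⟨N.1, old_maximal hpriv N.2 hN1L⟩ := dif_pos rfl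
    have hτval : ∀ U, U ≠ vL → (τ U).1 = U.1 := by
      intro U hU
      rw [hτ]
      simp [dif_neg hU]
    have hglue : τ vL = τ N := by
      rw [hτvL, hτ]
      simp [dif_neg hNvL]
    have hτℓ : ∀ U, τ U ≠ ℓ := by
      intro U h
      by_cases hU : U = vL
      · subst hU
        rw [hτvL] at h
        exact erase_not_maximal hL hy N.2 (congrArg Subtype.val h)
      · exact erase_not_maximal hL hy U.2 ((hτval U hU).symm.trans (congrArg Subtype.val h))
    have hnoex : ∀ u : {Z // Z ∈ maximalSets (F.filter (fun Z => ¬(x ∈ Z ∧ y ∈ Z)))},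
        u.1 ≠ L.erase x := by
      intro u h
      have hW₀G : W₀ ∈ F.filter (fun Z => ¬(x ∈ Z ∧ y ∈ Z)) :=
        mem_split.2 ⟨maximalSets_subset hW₀, fun hh => priv_not_mem hpriv hW₀ hW₀L hh.1⟩
      have := (mem_maximalSets'.1 u.2).2 W₀ hW₀G (h ▸ hW₀sub)
      exact erase_not_maximal hL hx hW₀ (this ▸ h)
    have hsurj : ∀ P, P ≠ ℓ → ∃ U, τ U = P := by
      intro P hP
      rcases split_classify hdc hL hx hy hxy hpriv P.2 with h1 | h2 | h3
      · exact absurd (Subtype.ext (h1.trans hℓval.symm)) hP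
      · exact absurd h2 (hnoex P)
      · refine ⟨⟨P.1, h3.1⟩, ?_⟩
        have : (⟨P.1, h3.1⟩ : {Z // Z ∈ maximalSets F}) ≠ vL :=
          fun h => h3.2 (congrArg Subtype.val h)
        exact Subtype.ext (hτval _ this)
    have hinj : ∀ U W, τ U = τ W → U = W ∨ (U = vL ∧ W = N) ∨ (U = N ∧ W = vL) := by
      intro U W h
      by_cases hU : U = vL <;> by_cases hW : W = vL
      · exact Or.inl (hU.trans hW.symm)
      · subst hU
        rw [hτvL] at h
        have : N.1 = W.1 := (congrArg Subtype.val h).trans (hτval W hW)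
        exact Or.inr (Or.inl ⟨rfl, (Subtype.ext this).symm⟩)
      · subst hW
        rw [hτvL] at h
        have : U.1 = N.1 := (hτval U hU).symm.trans (congrArg Subtype.val h)
        exact Or.inr (Or.inr ⟨Subtype.ext this, rfl⟩)
      · exact Or.inl (Subtype.ext (((hτval U hU).symm.trans
          (congrArg Subtype.val h)).trans (hτval W hW)))
    have hℓβ : ℓ ≠ τ vL := by
      intro h
      rw [hτvL] at h
      exact erase_not_maximal hL hy N.2 (congrArg Subtype.val h.symm)
    have hsub : L.erase x ⊆ (τ vL).1 := by
      rw [hτvL]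
      exact hsubN
    have hex : ∀ u : {Z // Z ∈ maximalSets (F.filter (fun Z => ¬(x ∈ Z ∧ y ∈ Z)))},
        u.1 = L.erase x → u = τ vL := fun u h => absurd h (hnoex u)
    exact ⟨surgeryGraph T τ ℓ vL, walkRIP_junction
      (surgery_isTree hJT.1 (Or.inr hadj) hglue hτℓ hsurj hinj)
      (split_RIP hdc hL hx hy hxy hpriv T hJT τ ℓ hℓval hτval hsub hex hℓβ)⟩
  · -- Case 1: L.erase x is itself maximal in the split family
    push_neg at hcase
    have hEx : L.erase x ∈ maximalSets (F.filter (fun Z => ¬(x ∈ Z ∧ y ∈ Z))) := by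
      refine mem_maximalSets'.2 ⟨mem_split.2 ⟨hdc L (maximalSets_subset hL) _
        (Finset.erase_subset _ _), fun h => (Finset.notMem_erase x L) h.1⟩, ?_⟩
      intro Z hZ hsubZ
      obtain ⟨hZF, hZxy⟩ := mem_split.1 hZ
      obtain ⟨W, hW, hZW⟩ := exists_maximal_superset hZF
      by_cases hWL : W = L
      · rw [hWL] at hZW
        have hyZ : y ∈ Z := hsubZ (Finset.mem_erase.2 ⟨Ne.symm hxy, hy⟩)
        have hxZ : x ∉ Z := fun h => hZxy ⟨h, hyZ⟩
        exact Finset.Subset.antisymm hsubZ (fun a ha =>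
          Finset.mem_erase.2 ⟨fun h => hxZ (h ▸ ha), hZW ha⟩)
      · exact absurd (hsubZ.trans hZW) (hcase W hW hWL)
    have hexy : L.erase x ≠ L.erase y := by
      intro h
      have : y ∈ L.erase x := Finset.mem_erase.2 ⟨Ne.symm hxy, hy⟩
      rw [h] at this
      exact Finset.notMem_erase y L this
    set τ : {Z // Z ∈ maximalSets F} →
        {Z // Z ∈ maximalSets (F.filter (fun Z => ¬(x ∈ Z ∧ y ∈ Z)))} :=
      fun U => if h : U = vL then ⟨L.erase x, hEx⟩
        else ⟨U.1, old_maximal hpriv U.2 (fun hh => h (Subtype.ext hh))⟩ with hτ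
    have hτvL : τ vL = ⟨L.erase x, hEx⟩ := dif_pos rfl
    have hτval : ∀ U, U ≠ vL → (τ U).1 = U.1 := by
      intro U hU
      rw [hτ]
      simp [dif_neg hU]
    have hτℓ : ∀ U, τ U ≠ ℓ := by
      intro U h
      by_cases hU : U = vL
      · subst hU
        rw [hτvL] at h
        exact hexy (congrArg Subtype.val h)
      · exact erase_not_maximal hL hy U.2 ((hτval U hU).symm.trans (congrArg Subtype.val h))
    have hsurj : ∀ P, P ≠ ℓ → ∃ U, τ U = P := by
      intro P hP
      rcases split_classify hdc hL hx hy hxy hpriv P.2 with h1 | h2 | h3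
      · exact absurd (Subtype.ext (h1.trans hℓval.symm)) hP
      · refine ⟨vL, ?_⟩
        rw [hτvL]
        exact Subtype.ext h2.symm
      · refine ⟨⟨P.1, h3.1⟩, ?_⟩
        have : (⟨P.1, h3.1⟩ : {Z // Z ∈ maximalSets F}) ≠ vL :=
          fun h => h3.2 (congrArg Subtype.val h)
        exact Subtype.ext (hτval _ this)
    have hinj : ∀ U W, τ U = τ W → U = W ∨ (U = vL ∧ W = vL) ∨ (U = vL ∧ W = vL) := by
      intro U W h
      by_cases hU : U = vL <;> by_cases hW : W = vL
      · exact Or.inl (hU.trans hW.symm)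
      · subst hU
        rw [hτvL] at h
        exact absurd ((congrArg Subtype.val h).trans (hτval W hW)).symm
          (erase_not_maximal hL hx W.2)
      · subst hW
        rw [hτvL] at h
        exact absurd ((hτval U hU).symm.trans (congrArg Subtype.val h))
          (erase_not_maximal hL hx U.2)
      · exact Or.inl (Subtype.ext (((hτval U hU).symm.trans
          (congrArg Subtype.val h)).trans (hτval W hW)))
    have hℓβ : ℓ ≠ τ vL := by
      intro h
      rw [hτvL] at h
      exact hexy (congrArg Subtype.val h).symm
    have hsub : L.erase x ⊆ (τ vL).1 := by
      rw [hτvL]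
    have hex : ∀ u : {Z // Z ∈ maximalSets (F.filter (fun Z => ¬(x ∈ Z ∧ y ∈ Z)))},
        u.1 = L.erase x → u = τ vL := by
      intro u h
      rw [hτvL]
      exact Subtype.ext h
    exact ⟨surgeryGraph T τ ℓ vL, walkRIP_junction
      (surgery_isTree hJT.1 (Or.inl rfl) rfl hτℓ hsurj hinj)
      (split_RIP hdc hL hx hy hxy hpriv T hJT τ ℓ hℓval hτval hsub hex hℓβ)⟩

lemma exists_private (hJ : Decomposable F)
    (hbig : ∃ L ∈ maximalSets F, 2 ≤ L.card) :
    ∃ L ∈ maximalSets F, 2 ≤ L.card ∧ ∃ x ∈ L, ∀ Y ∈ maximalSets F, x ∈ Y → Y = L := by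
  classical
  obtain ⟨T, hJT⟩ := hJ
  obtain ⟨L₀, hL₀, hL₀big⟩ := hbig
  by_contra hcon0
  have hcon : ∀ (S : {Z // Z ∈ maximalSets F}), 2 ≤ S.1.card → ∀ x' ∈ S.1,
      ∃ Yv : {Z // Z ∈ maximalSets F}, x' ∈ Yv.1 ∧ Yv ≠ S := by
    intro S hS x' hx'
    by_contra h2
    push_neg at h2
    exact hcon0 ⟨S.1, S.2, hS, x', hx', fun Y hY hxY =>
      (congrArg Subtype.val (h2 ⟨Y, hY⟩ hxY)).symm ▸ rfl⟩
  set r : {Z // Z ∈ maximalSets F} := ⟨L₀, hL₀⟩ with hr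
  -- every element of a big maximal set has a big neighbour (in T) containing it
  have hbigN : ∀ (S N : {Z // Z ∈ maximalSets F}), T.Adj S N → ∀ x' ∈ S.1, x' ∈ N.1 →
      2 ≤ N.1.card := by
    intro S N hadj x' hx'S hx'
    by_contra hsmall
    push_neg at hsmall
    have hNsing : N.1 = {x'} := by
      apply Finset.eq_singleton_iff_unique_mem.2
      exact ⟨hx', fun z hz => Finset.card_le_one.1 (by omega) z hz x' hx'⟩
    have hsub : N.1 ⊆ S.1 := by
      rw [hNsing]
      intro z hz
      rw [Finset.mem_singleton] at hz
      subst hz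
      exact hx'S
    have := (mem_maximalSets'.1 N.2).2 S.1 (maximalSets_subset S.2) hsub
    exact hadj.ne' (Subtype.ext this)
  have key : ∀ n : ℕ, ∃ (S : {Z // Z ∈ maximalSets F}) (w : T.Walk S r),
      2 ≤ S.1.card ∧ w.IsPath ∧ n ≤ w.length := by
    intro n
    induction n with
    | zero => exact ⟨r, SimpleGraph.Walk.nil, hL₀big, SimpleGraph.Walk.IsPath.nil, Nat.zero_le _⟩
    | succ n ih =>
      obtain ⟨S, w, hSbig, hwp, hlen⟩ := ih
      have nb : ∀ x' ∈ S.1, ∃ N : {Z // Z ∈ maximalSets F}, T.Adj S N ∧ x' ∈ N.1 := by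
        intro x' hx'
        obtain ⟨Yv, hxY, hYS⟩ := hcon S hSbig x' hx'
        obtain ⟨w3, hw3⟩ := junction_walkRIP hJT S Yv x' hx' hxY
        obtain ⟨N, hadj, p₂, hp⟩ := SimpleGraph.Walk.exists_eq_cons_of_ne (Ne.symm hYS) w3.toPath.1
        refine ⟨N, hadj, hw3 N (SimpleGraph.Walk.support_bypass_subset _ ?_)⟩
        show N ∈ w3.toPath.1.support
        rw [hp]
        simp
      by_cases hex2 : ∃ N : {Z // Z ∈ maximalSets F}, T.Adj S N ∧ 2 ≤ N.1.card ∧ N ∉ w.support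
      · obtain ⟨N, hadj, hNbig, hNs⟩ := hex2
        refine ⟨N, SimpleGraph.Walk.cons hadj.symm w, hNbig,
          (SimpleGraph.Walk.cons_isPath_iff _ _).2 ⟨hwp, hNs⟩, ?_⟩
        rw [SimpleGraph.Walk.length_cons]
        omega
      · exfalso
        push_neg at hex2
        cases w with
        | nil =>
          have hpos := lt_of_lt_of_le (by norm_num : (0:ℕ) < 2) hSbig
          obtain ⟨x', hx'⟩ := Finset.card_pos.1 hpos
          obtain ⟨N, hadj, hx'N⟩ := nb x' hx'
          have hNbig := hbigN _ N hadj x' hx' hx'N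
          have := hex2 N hadj hNbig
          simp only [SimpleGraph.Walk.support_nil, List.mem_cons, List.not_mem_nil,
            or_false] at this
          exact hadj.ne' this
        | @cons _ s2 _ h₀ w₀ =>
          have hsub : S.1 ⊆ s2.1 := by
            intro x' hx'
            obtain ⟨N, hadj, hx'N⟩ := nb x' hx'
            have hNbig := hbigN _ N hadj x' hx' hx'N
            have hNsupp : N ∈ (SimpleGraph.Walk.cons h₀ w₀).support := hex2 N hadj hNbig
            have hNs2 : N = s2 := by
              have htp : ((SimpleGraph.Walk.cons h₀ w₀).takeUntil N hNsupp).IsPath :=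
                hwp.takeUntil hNsupp
              have huniq := hJT.1.IsAcyclic.path_unique
                ⟨_, htp⟩ (SimpleGraph.Path.singleton hadj)
              have hval : (SimpleGraph.Walk.cons h₀ w₀).takeUntil N hNsupp =
                  SimpleGraph.Walk.cons hadj SimpleGraph.Walk.nil :=
                congrArg Subtype.val huniq
              have hspec := SimpleGraph.Walk.take_spec (SimpleGraph.Walk.cons h₀ w₀) hNsupp
              rw [hval] at hspec
              rw [SimpleGraph.Walk.cons_append, SimpleGraph.Walk.nil_append] at hspec
              injection hspec.symm with h1 h2 h3 h4
              exact h2.symm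
            subst hNs2
            exact hx'N
          have := (mem_maximalSets'.1 S.2).2 s2.1 (maximalSets_subset s2.2) hsub
          exact h₀.ne (Subtype.ext this)
  obtain ⟨S, w, _, hwp, hlen⟩ := key (Fintype.card {Z // Z ∈ maximalSets F})
  have := hwp.length_lt
  omega


end SplitSection

section SplitSection
variable {A : Type*} [Fintype A] [DecidableEq A]
variable {F : Finset (Finset A)} {L : Finset A} {x y : A}

lemma split_dc (hdc : DownwardClosed F) :
    DownwardClosed (F.filter fun Z => ¬(x ∈ Z ∧ y ∈ Z)) := by
  intro X hX Y hY
  obtain ⟨hXF, hXxy⟩ := mem_split.1 hX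
  exact mem_split.2 ⟨hdc X hXF Y hY, fun h => hXxy ⟨hY h.1, hY h.2⟩⟩

lemma split_sing (hsing : ∀ a : A, {a} ∈ F) (hxy : x ≠ y) :
    ∀ a : A, {a} ∈ F.filter fun Z => ¬(x ∈ Z ∧ y ∈ Z) := by
  intro a
  refine mem_split.2 ⟨hsing a, ?_⟩
  rintro ⟨h1, h2⟩
  rw [Finset.mem_singleton] at h1 h2
  exact hxy (h1.trans h2.symm)

lemma split_card_lt (hL : L ∈ maximalSets F) (hx : x ∈ L) (hy : y ∈ L) :
    (F.filter fun Z => ¬(x ∈ Z ∧ y ∈ Z)).card < F.card := by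
  apply Finset.card_lt_card
  constructor
  · exact Finset.filter_subset _ _
  · intro hsub
    have := mem_split.1 (hsub (maximalSets_subset hL))
    exact this.2 ⟨hx, hy⟩

lemma decomposable_nonempty (hF : Decomposable F) : F.Nonempty := by
  obtain ⟨T, hJT⟩ := hF
  obtain ⟨⟨W, hW⟩⟩ := hJT.1.isConnected.nonempty
  exact ⟨W, maximalSets_subset hW⟩

lemma mem_indepFam {Z : Finset A} : Z ∈ indepFam A ↔ Z = ∅ ∨ ∃ a, Z = {a} := by
  simp only [indepFam, Finset.mem_insert, Finset.mem_image, Finset.mem_univ, true_and]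
  constructor
  · rintro (h | ⟨a, h⟩)
    exacts [Or.inl h, Or.inr ⟨a, h.symm⟩]
  · rintro (h | ⟨a, h⟩)
    exacts [Or.inl h, Or.inr ⟨a, h.symm⟩]

lemma exists_big_of_ne_indep (hdc : DownwardClosed F) (hF : Decomposable F)
    (hsing : ∀ a : A, {a} ∈ F) (hne : F ≠ indepFam A) :
    ∃ L ∈ maximalSets F, 2 ≤ L.card := by
  by_contra hcon
  push_neg at hcon
  apply hne
  have hempty : ∅ ∈ F :=
    hdc _ (decomposable_nonempty hF).choose_spec _ (Finset.empty_subset _)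
  ext Z
  constructor
  · intro hZ
    obtain ⟨W, hW, hZW⟩ := exists_maximal_superset hZ
    have hWc : W.card < 2 := hcon W hW
    have hZc : Z.card ≤ W.card := Finset.card_le_card hZW
    have : Z.card = 0 ∨ Z.card = 1 := by omega
    rcases this with h | h
    · exact mem_indepFam.2 (Or.inl (Finset.card_eq_zero.1 h))
    · exact mem_indepFam.2 (Or.inr (Finset.card_eq_one.1 h))
  · intro hZ
    rcases mem_indepFam.1 hZ with rfl | ⟨a, rfl⟩
    exacts [hempty, hsing a]

lemma merge_back {G : Finset (Finset A)} (hdc : DownwardClosed F) (hF : Decomposable F)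
    (hstep : LegalSplitStep F G) : LegalMergeStep G F := by
  obtain ⟨X, hX, x, hx, y, hy, hxy, huniq, rfl⟩ := hstep
  refine ⟨(X.erase x).erase y, x, y, ?_, ?_, hxy, ?_, hF⟩
  · intro h
    have hx1 : x ≠ y := hxy
    rw [Finset.mem_erase, Finset.mem_erase] at h
    exact h.2.1 rfl
  · exact Finset.notMem_erase y _
  · have h1 : insert y ((X.erase x).erase y) = X.erase x :=
      Finset.insert_erase (Finset.mem_erase.2 ⟨Ne.symm hxy, hy⟩)
    have h2 : insert x (insert y ((X.erase x).erase y)) = X := by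
      rw [h1]
      exact Finset.insert_erase hx
    rw [h2]
    ext Z
    rw [Finset.mem_union]
    constructor
    · intro hZ
      by_cases hxyZ : x ∈ Z ∧ y ∈ Z
      · right
        rw [Finset.mem_powerset]
        obtain ⟨W, hW, hZW⟩ := exists_maximal_superset hZ
        have := huniq W hW (hZW hxyZ.1) (hZW hxyZ.2)
        exact this ▸ hZW
      · exact Or.inl (mem_split.2 ⟨hZ, hxyZ⟩)
    · rintro (hZ | hZ)
      · exact (mem_split.1 hZ).1
      · exact hdc X (maximalSets_subset hX) Z (Finset.mem_powerset.1 hZ)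

lemma chain_to_indep : ∀ (n : ℕ) (F : Finset (Finset A)), F.card ≤ n → DownwardClosed F →
    Decomposable F → (∀ a : A, {a} ∈ F) →
    Relation.ReflTransGen (fun G H => LegalSplitStep G H ∧
      (DownwardClosed G ∧ Decomposable G ∧ ∀ a : A, {a} ∈ G) ∧
      (DownwardClosed H ∧ Decomposable H ∧ ∀ a : A, {a} ∈ H)) F (indepFam A) := by
  intro n
  induction n with
  | zero =>
    intro F hcard hdc hF hsing
    obtain ⟨Z, hZ⟩ := decomposable_nonempty hF
    have := Finset.card_pos.2 ⟨Z, hZ⟩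
    omega
  | succ n ih =>
    intro F hcard hdc hF hsing
    by_cases heq : F = indepFam A
    · exact heq ▸ Relation.ReflTransGen.refl
    · obtain ⟨L, hL, hLbig, x, hx, hpriv⟩ :=
        exists_private hF (exists_big_of_ne_indep hdc hF hsing heq)
      obtain ⟨y, hy, hyx⟩ := Finset.exists_mem_ne (lt_of_lt_of_le one_lt_two hLbig) x
      have hxy : x ≠ y := Ne.symm hyx
      have hlegal : LegalSplitStep F (F.filter fun Z => ¬(x ∈ Z ∧ y ∈ Z)) :=
        ⟨L, hL, x, hx, y, hy, hxy, fun Y hY hxY _ => hpriv Y hY hxY, rfl⟩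
      have hdc' := split_dc (x := x) (y := y) hdc
      have hF' := split_decomposable hdc hF hL hx hy hxy hpriv
      have hsing' := split_sing hsing hxy
      have hcard' := split_card_lt hL hx hy
      exact Relation.ReflTransGen.head
        ⟨hlegal, ⟨hdc, hF, hsing⟩, ⟨hdc', hF', hsing'⟩⟩
        (ih _ (by omega) hdc' hF' hsing')


end SplitSection

/-- Theorem (ergodicity): any decomposable family can be transformed to the family of all
singletons (the independence model) by a finite sequence of legal splits; consequently any
decomposable family can be reached from any other by a finite sequence of legal splits and
merges. -/
theorem reachability (F : Finset (Finset A)) (hdc : DownwardClosed F) (hF : Decomposable F)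
    (hsing : ∀ a : A, {a} ∈ F) :
    Relation.ReflTransGen LegalSplitStep F (indepFam A) ∧
    ∀ F' : Finset (Finset A), DownwardClosed F' → Decomposable F' → (∀ a : A, {a} ∈ F') →
      Relation.ReflTransGen (fun G H => LegalSplitStep G H ∨ LegalMergeStep G H) F F' := by

  have t1 := chain_to_indep F.card F le_rfl hdc hF hsing
  constructor
  · exact Relation.ReflTransGen.mono (fun a b h => h.1) _ _ t1
  · intro F' hdc' hF' hsing'
    have t2 := chain_to_indep F'.card F' le_rfl hdc' hF' hsing'
    have t2' := Relation.ReflTransGen.swap _ _ t2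
    have mrev : Relation.ReflTransGen LegalMergeStep (indepFam A) F' :=
      Relation.ReflTransGen.mono
        (fun a b h => merge_back h.2.1.1 h.2.1.2.1 h.1) _ _ t2'
    exact (Relation.ReflTransGen.mono (fun a b h => Or.inl h.1) _ _ t1).trans
      (Relation.ReflTransGen.mono (fun a b h => Or.inr h) _ _ mrev)
end

section
/- In any junction tree of a decomposable family F, if a leaf node X has |X| ≥ 2, then there exists an item x ∈ X that is not contained in any other maximal itemset of F. -/
open scoped Classical

variable {A : Type*} [Fintype A] [DecidableEq A]

/-- In any junction tree of a decomposable family `F`, a leaf node `X` (degree at most 1)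
with `|X| ≥ 2` contains an item `x` belonging to no other maximal itemset of `F`. -/
theorem leaf_has_private_item (F : Finset (Finset A)) (hdc : DownwardClosed F)
    (G : SimpleGraph {X // X ∈ maximalSets F}) (hG : IsJunctionTree F G)
    (X : {X // X ∈ maximalSets F})
    (hleaf : ∀ Y Z, G.Adj X Y → G.Adj X Z → Y = Z)
    (hcard : 2 ≤ X.1.card) :
    ∃ x ∈ X.1, ∀ Y ∈ maximalSets F, Y ≠ X.1 → x ∉ Y := by
  obtain ⟨htree, hRIP⟩ := hG
  by_cases hnbr : ∃ Y, G.Adj X Y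
  · obtain ⟨Y0, hY0⟩ := hnbr
    have hXY : X ≠ Y0 := G.ne_of_adj hY0
    have hX1Y1 : X.1 ≠ Y0.1 := fun h => hXY (Subtype.ext h)
    have hnotsub : ¬ X.1 ⊆ Y0.1 := by
      intro hsub
      exact hX1Y1 ((Finset.mem_filter.mp X.2).2 Y0.1 (Finset.mem_filter.mp Y0.2).1 hsub)
    obtain ⟨x, hxX, hxY0⟩ := Finset.not_subset.mp hnotsub
    refine ⟨x, hxX, ?_⟩
    intro Y hY hYne hxY
    have hZX : X ≠ (⟨Y, hY⟩ : {X // X ∈ maximalSets F}) := by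
      intro h
      exact hYne (by rw [h])
    obtain ⟨p, hp⟩ := (htree.isConnected.preconnected X ⟨Y, hY⟩).some.toPath
    have hpn : ¬ p.Nil := SimpleGraph.Walk.not_nil_of_ne hZX
    have hadj : G.Adj X (p.getVert 1) := p.adj_snd hpn
    have hmem : p.getVert 1 ∈ p.support :=
      SimpleGraph.Walk.mem_support_iff_exists_getVert.mpr ⟨1, rfl, by
        have := SimpleGraph.Walk.not_nil_iff_lt_length.mp hpn; omega⟩
    have hW : p.getVert 1 = Y0 := hleaf _ Y0 hadj hY0
    have hxW : x ∈ (p.getVert 1).1 := hRIP X ⟨Y, hY⟩ x hxX hxY p hp _ hmem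
    rw [hW] at hxW
    exact hxY0 hxW
  · push_neg at hnbr
    have hpos : 0 < X.1.card := by omega
    obtain ⟨x, hxX⟩ := Finset.card_pos.mp hpos
    refine ⟨x, hxX, ?_⟩
    intro Y hY hYne _
    have hZX : X ≠ (⟨Y, hY⟩ : {X // X ∈ maximalSets F}) := by
      intro h
      exact hYne (by rw [h])
    obtain ⟨p, hp⟩ := (htree.isConnected.preconnected X ⟨Y, hY⟩).some.toPath
    have hpn : ¬ p.Nil := SimpleGraph.Walk.not_nil_of_ne hZX
    exact hnbr _ (p.adj_snd hpn)
end

section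
/- Let F be a decomposable family and X a maximal itemset with distinct items x, y ∈ X such that split(X,x,y) is legal. Then the number of itemsets removed from F by the split equals 2^{|X|−2}; i.e., |F| − |F'| = 2^{|X|−2} where F' is the family after the split. -/
open scoped Classical

variable {A : Type*} [Fintype A] [DecidableEq A]

/-- If `split(X,x,y)` is legal (i.e. `X` is the unique maximal itemset containing both
`x` and `y`), then the number of itemsets removed from `F` by the split equals
`2^(|X|−2)`. -/
theorem split_removes_count (F : Finset (Finset A))
    (hdc : DownwardClosed F) (hF : Decomposable F)
    (X : Finset A) (hX : X ∈ maximalSets F) (x y : A)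
    (hx : x ∈ X) (hy : y ∈ X) (hxy : x ≠ y)
    (hlegal : ∀ Y ∈ maximalSets F, x ∈ Y → y ∈ Y → Y = X) :
    F.card - (F.filter fun Z => ¬(x ∈ Z ∧ y ∈ Z)).card = 2 ^ (X.card - 2) := by
  classical
  have hXF : X ∈ F := (Finset.mem_filter.mp hX).1
  have hxyX : ({x, y} : Finset A) ⊆ X := by
    intro a ha
    rcases Finset.mem_insert.mp ha with h | h
    · exact h ▸ hx
    · exact (Finset.mem_singleton.mp h) ▸ hy
  have hmax : ∀ Z ∈ F, ∃ Y ∈ maximalSets F, Z ⊆ Y := by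
    intro Z hZ
    obtain ⟨Y, hYs, hYmax⟩ : ∃ Y ∈ F.filter (fun W => Z ⊆ W),
        ∀ W ∈ F.filter (fun W => Z ⊆ W), ¬ Y < W := by
      obtain ⟨Y, hY1, hY2⟩ := Finset.exists_maximal (s := F.filter fun W => Z ⊆ W)
        ⟨Z, Finset.mem_filter.mpr ⟨hZ, Finset.Subset.refl Z⟩⟩
      exact ⟨Y, hY1, fun W hW hlt => hlt.not_ge (hY2 hW hlt.le)⟩
    rw [Finset.mem_filter] at hYs
    refine ⟨Y, Finset.mem_filter.mpr ⟨hYs.1, ?_⟩, hYs.2⟩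
    intro W hW hYW
    by_contra hne
    exact hYmax W (Finset.mem_filter.mpr ⟨hW, hYs.2.trans hYW⟩)
      (lt_of_le_of_ne hYW hne)
  have key : F.filter (fun Z => x ∈ Z ∧ y ∈ Z)
      = (X \ {x, y}).powerset.image (fun S => S ∪ {x, y}) := by
    ext Z
    simp only [Finset.mem_filter, Finset.mem_image, Finset.mem_powerset]
    constructor
    · rintro ⟨hZF, hxZ, hyZ⟩
      obtain ⟨Y, hY, hZY⟩ := hmax Z hZF
      have hYX : Y = X := hlegal Y hY (hZY hxZ) (hZY hyZ)
      have hZX : Z ⊆ X := hYX ▸ hZY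
      have hxysub : ({x, y} : Finset A) ⊆ Z := by
        intro a ha
        rcases Finset.mem_insert.mp ha with h | h
        · exact h ▸ hxZ
        · exact (Finset.mem_singleton.mp h) ▸ hyZ
      refine ⟨Z \ {x, y}, Finset.sdiff_subset_sdiff hZX (Finset.Subset.refl _), ?_⟩
      rw [Finset.sdiff_union_self_eq_union, Finset.union_eq_left.mpr hxysub]
    · rintro ⟨S, hS, rfl⟩
      have hsub : S ∪ {x, y} ⊆ X :=
        Finset.union_subset (hS.trans Finset.sdiff_subset) hxyX
      exact ⟨hdc X hXF _ hsub,
        Finset.mem_union_right _ (Finset.mem_insert_self _ _),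
        Finset.mem_union_right _ (Finset.mem_insert.mpr (Or.inr (Finset.mem_singleton_self _)))⟩
  have hinj : Set.InjOn (fun S => S ∪ {x, y}) ((X \ {x, y}).powerset : Set (Finset A)) := by
    intro S hS T hT h
    simp only [Finset.coe_powerset, Set.mem_preimage, Set.mem_powerset_iff,
      Finset.coe_subset] at hS hT
    have hSd : Disjoint S {x, y} := Finset.disjoint_of_subset_left hS Finset.sdiff_disjoint
    have hTd : Disjoint T {x, y} := Finset.disjoint_of_subset_left hT Finset.sdiff_disjoint
    have h2 : (S ∪ {x, y}) \ {x, y} = (T ∪ {x, y}) \ {x, y} := congrArg (· \ {x, y}) h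
    rwa [Finset.union_sdiff_right, Finset.union_sdiff_right,
      Finset.sdiff_eq_self_of_disjoint hSd, Finset.sdiff_eq_self_of_disjoint hTd] at h2
  have hcardxy : ({x, y} : Finset A).card = 2 := by
    rw [Finset.card_insert_of_notMem (by simp [hxy]), Finset.card_singleton]
  have hcard : (F.filter (fun Z => x ∈ Z ∧ y ∈ Z)).card = 2 ^ (X.card - 2) := by
    rw [key, Finset.card_image_of_injOn hinj, Finset.card_powerset,
      Finset.card_sdiff_of_subset hxyX, hcardxy]
  have hsplit := Finset.card_filter_add_card_filter_not
    (s := F) (p := fun Z => x ∈ Z ∧ y ∈ Z)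
  omega
end

section
/- Let F be a downward closed decomposable family and G the family after the legal merge merge(S,x,y), with Z = S∪{x,y}. Then the reduced family R(G;S) is obtained from R(F;S) by merging into a single set the (distinct) members of R(F;S) containing x and containing y respectively. -/
open scoped Classical

variable {A : Type*} [Fintype A] [DecidableEq A]

open Relation

set_option linter.unusedSectionVars false
set_option linter.unusedVariables false

abbrev brel (F : Finset (Finset A)) (S : Finset A) (P Q : Finset A) : Prop :=
  P ∈ baseFam F S ∧ Q ∈ baseFam F S ∧ (P ∩ Q).Nonempty

lemma mem_component {F : Finset (Finset A)} {S U : Finset A} {a : A} :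
    a ∈ component F S U ↔
      ∃ P, (P ∈ baseFam F S ∧ ReflTransGen (brel F S) U P) ∧ a ∈ P := by
  unfold component
  rw [Finset.mem_sup]
  simp only [Finset.mem_filter, id_eq]

lemma brel_symm {F : Finset (Finset A)} {S : Finset A} : Symmetric (brel F S) :=
  fun _ _ h => ⟨h.2.1, h.1, by rw [Finset.inter_comm]; exact h.2.2⟩

lemma reach_symm {F : Finset (Finset A)} {S U P : Finset A}
    (h : ReflTransGen (brel F S) U P) : ReflTransGen (brel F S) P U :=
  haveI : Std.Symm (brel F S) := ⟨fun a b h => brel_symm h⟩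
  (ReflTransGen.symmetric (r := brel F S)).symm _ _ h

lemma reach_mem {F : Finset (Finset A)} {S U P : Finset A}
    (h : ReflTransGen (brel F S) U P) (hU : U ∈ baseFam F S) : P ∈ baseFam F S := by
  induction h with
  | refl => exact hU
  | tail _ h2 _ => exact h2.2.1

lemma subset_component_of_reach {F : Finset (Finset A)} {S U P : Finset A}
    (h : ReflTransGen (brel F S) U P) (hP : P ∈ baseFam F S) :
    P ⊆ component F S U := fun _ ha => mem_component.2 ⟨P, ⟨hP, h⟩, ha⟩

lemma component_congr {F : Finset (Finset A)} {S U P : Finset A}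
    (h : ReflTransGen (brel F S) U P) : component F S U = component F S P := by
  ext a
  simp only [mem_component]
  constructor
  · rintro ⟨Q, ⟨hQ, hr⟩, ha⟩; exact ⟨Q, ⟨hQ, (reach_symm h).trans hr⟩, ha⟩
  · rintro ⟨Q, ⟨hQ, hr⟩, ha⟩; exact ⟨Q, ⟨hQ, h.trans hr⟩, ha⟩

lemma reach_of_inter_component {F : Finset (Finset A)} {S U P : Finset A}
    (hP : P ∈ baseFam F S) (hn : ∃ a, a ∈ P ∧ a ∈ component F S U) :
    ReflTransGen (brel F S) U P := by
  obtain ⟨a, haP, haC⟩ := hn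
  obtain ⟨Q, ⟨hQ, hr⟩, haQ⟩ := mem_component.1 haC
  exact hr.tail ⟨hQ, hP, ⟨a, Finset.mem_inter.2 ⟨haQ, haP⟩⟩⟩

lemma component_eq_of_mem_inter {F : Finset (Finset A)} {S U U' : Finset A} {a : A}
    (h : a ∈ component F S U) (h' : a ∈ component F S U') :
    component F S U = component F S U' := by
  obtain ⟨P, ⟨hPB, hr⟩, haP⟩ := mem_component.1 h
  have hr' := reach_of_inter_component hPB ⟨a, haP, h'⟩
  exact (component_congr hr).trans (component_congr hr').symm

lemma base_nonempty {F : Finset (Finset A)} {S P : Finset A}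
    (h : P ∈ baseFam F S) : P.Nonempty := by
  simp only [baseFam, Finset.mem_image, Finset.mem_filter] at h
  obtain ⟨X, ⟨_, hSX⟩, rfl⟩ := h
  obtain ⟨a, haX, haS⟩ := Finset.exists_of_ssubset hSX
  exact ⟨a, Finset.mem_sdiff.2 ⟨haX, haS⟩⟩

lemma exists_maximal_superset_s14 {F : Finset (Finset A)} {Y : Finset A} (hY : Y ∈ F) :
    ∃ X ∈ maximalSets F, Y ⊆ X := by
  obtain ⟨X, hX, hmax⟩ := Finset.exists_max_image (F.filter fun X => Y ⊆ X)
    (fun X => X.card) ⟨Y, Finset.mem_filter.2 ⟨hY, subset_rfl⟩⟩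
  rw [Finset.mem_filter] at hX
  refine ⟨X, Finset.mem_filter.2 ⟨hX.1, fun B hB hXB => ?_⟩, hX.2⟩
  exact Finset.eq_of_subset_of_card_le hXB
    (hmax B (Finset.mem_filter.2 ⟨hB, hX.2.trans hXB⟩))

lemma eq_of_subset_pair {x y : A} {P : Finset A} (h : P ⊆ insert x {y}) :
    P = ∅ ∨ P = {x} ∨ P = {y} ∨ P = insert x {y} := by
  have h' : ∀ a ∈ P, a = x ∨ a = y := by
    intro a ha; have := h ha; simpa using this
  by_cases hx : x ∈ P <;> by_cases hy : y ∈ P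
  · right; right; right
    refine Finset.Subset.antisymm h fun a ha => ?_
    simp only [Finset.mem_insert, Finset.mem_singleton] at ha
    rcases ha with rfl | rfl <;> assumption
  · right; left
    refine Finset.Subset.antisymm (fun a ha => ?_) (Finset.singleton_subset_iff.2 hx)
    rcases h' a ha with rfl | rfl
    · exact Finset.mem_singleton_self a
    · exact absurd ha hy
  · right; right; left
    refine Finset.Subset.antisymm (fun a ha => ?_) (Finset.singleton_subset_iff.2 hy)
    rcases h' a ha with rfl | rfl
    · exact absurd ha hx
    · exact Finset.mem_singleton_self a
  · left
    refine Finset.eq_empty_of_forall_notMem fun a ha => ?_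
    rcases h' a ha with rfl | rfl
    · exact hx ha
    · exact hy ha

noncomputable def sigma' (x y : A) (P : Finset A) : Finset A :=
  if P = {x} ∨ P = {y} then insert x {y} else P

lemma sigma'_eq {x y : A} {P : Finset A} (h1 : P ≠ {x}) (h2 : P ≠ {y}) :
    sigma' x y P = P := if_neg (by tauto)

lemma subset_sigma' {x y : A} {P : Finset A} : P ⊆ sigma' x y P := by
  unfold sigma'
  split
  · next h =>
      rcases h with rfl | rfl
      · intro a ha; simp only [Finset.mem_singleton] at ha; simp [ha]
      · intro a ha; simp only [Finset.mem_singleton] at ha; simp [ha]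
  · exact subset_rfl

/-- Theorem (update of the reduced family at `S` under a legal merge `merge(S,x,y)`):
if `V, W` are the (distinct) members of `R(F;S)` containing `x` and `y` respectively,
then `R(G';S)` is obtained from `R(F;S)` by merging `V` and `W` into the single set
`V ∪ W`. -/
theorem merge_updates_reduced_family (F : Finset (Finset A))
    (hdc : DownwardClosed F) (hF : Decomposable F)
    (S : Finset A) (x y : A) (hx : x ∉ S) (hy : y ∉ S) (hxy : x ≠ y)
    (V W : Finset A) (hV : V ∈ reducedFamily F S) (hW : W ∈ reducedFamily F S)
    (hVW : V ≠ W) (hxV : x ∈ V) (hyW : y ∈ W)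
    (G' : Finset (Finset A)) (hG' : G' = F ∪ (insert x (insert y S)).powerset)
    (hlegal : Decomposable G') :
    reducedFamily G' S = insert (V ∪ W) (reducedFamily F S \ {V, W}) := by
  subst hG'
  set Z : Finset A := insert x (insert y S) with hZdef
  set Gm : Finset (Finset A) := F ∪ Z.powerset with hGmdef
  set T : Finset A := insert x {y} with hTdef
  obtain ⟨UV, hUVB, hVeq⟩ := hV
  obtain ⟨UW, hUWB, hWeq⟩ := hW
  have hxT : x ∈ T := Finset.mem_insert_self _ _
  have hyT : y ∈ T := by rw [hTdef]; simp
  have hxZ : x ∈ Z := Finset.mem_insert_self _ _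
  have hyZ : y ∈ Z := by rw [hZdef]; simp
  have hSsubZ : S ⊆ Z := by
    intro a ha; rw [hZdef]; simp [ha]
  have hSZ : S ⊂ Z := Finset.ssubset_def.2 ⟨hSsubZ, fun h => hx (h hxZ)⟩
  have hZS : Z \ S = T := by
    ext a
    rw [hZdef, hTdef]
    simp only [Finset.mem_sdiff, Finset.mem_insert, Finset.mem_singleton]
    constructor
    · rintro ⟨rfl | rfl | h, h2⟩
      · exact Or.inl rfl
      · exact Or.inr rfl
      · exact absurd h h2
    · rintro (rfl | rfl)
      · exact ⟨Or.inl rfl, hx⟩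
      · exact ⟨Or.inr (Or.inl rfl), hy⟩
  -- no base member of F contains both x and y
  have no_both : ∀ P ∈ baseFam F S, ¬(x ∈ P ∧ y ∈ P) := by
    rintro P hPB ⟨hxP, hyP⟩
    have hxC : x ∈ component F S P :=
      mem_component.2 ⟨P, ⟨hPB, ReflTransGen.refl⟩, hxP⟩
    have hyC : y ∈ component F S P :=
      mem_component.2 ⟨P, ⟨hPB, ReflTransGen.refl⟩, hyP⟩
    have hxUV : x ∈ component F S UV := by rw [← hVeq]; exact hxV
    have hyUW : y ∈ component F S UW := by rw [← hWeq]; exact hyW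
    have h1 : component F S UV = component F S P := component_eq_of_mem_inter hxUV hxC
    have h2 : component F S UW = component F S P := component_eq_of_mem_inter hyUW hyC
    exact hVW ((hVeq.trans (h1.trans h2.symm)).trans hWeq.symm)
  have hTnotB : T ∉ baseFam F S := fun h => no_both T h ⟨hxT, hyT⟩
  have hZGm : Z ∈ Gm := Finset.mem_union_right _ (Finset.mem_powerset.2 subset_rfl)
  -- Z is maximal in Gm
  have hZmax : Z ∈ maximalSets Gm := by
    rw [maximalSets, Finset.mem_filter]
    refine ⟨hZGm, fun Y hY hZY => ?_⟩
    rcases Finset.mem_union.1 hY with hYF | hYP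
    · obtain ⟨X, hXmax, hYX⟩ := exists_maximal_superset_s14 hYF
      have hSX : S ⊂ X := Finset.ssubset_def.2
        ⟨(hSsubZ.trans hZY).trans hYX, fun h => hx (h (hYX (hZY hxZ)))⟩
      exfalso
      refine no_both (X \ S) ?_ ⟨?_, ?_⟩
      · simp only [baseFam, Finset.mem_image, Finset.mem_filter]
        exact ⟨X, ⟨hXmax, hSX⟩, rfl⟩
      · exact Finset.mem_sdiff.2 ⟨hYX (hZY hxZ), hx⟩
      · exact Finset.mem_sdiff.2 ⟨hYX (hZY hyZ), hy⟩
    · exact Finset.Subset.antisymm hZY (Finset.mem_powerset.1 hYP)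
  -- maximal sets of F not contained in Z stay maximal
  have hmax_pres : ∀ X ∈ maximalSets F, ¬X ⊆ Z → X ∈ maximalSets Gm := by
    intro X hX hXZ
    rw [maximalSets, Finset.mem_filter] at hX ⊢
    refine ⟨Finset.mem_union_left _ hX.1, fun Y hY hXY => ?_⟩
    rcases Finset.mem_union.1 hY with hYF | hYP
    · exact hX.2 Y hYF hXY
    · exact absurd (hXY.trans (Finset.mem_powerset.1 hYP)) hXZ
  have hTB' : T ∈ baseFam Gm S := by
    simp only [baseFam, Finset.mem_image, Finset.mem_filter]
    exact ⟨Z, ⟨hZmax, hSZ⟩, hZS⟩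
  -- characterization of baseFam Gm S
  have hB'char : ∀ P ∈ baseFam Gm S,
      P = T ∨ (P ∈ baseFam F S ∧ P ≠ {x} ∧ P ≠ {y}) := by
    intro P hP
    simp only [baseFam, Finset.mem_image, Finset.mem_filter] at hP
    obtain ⟨X, ⟨hXmax, hSX⟩, rfl⟩ := hP
    rw [maximalSets, Finset.mem_filter] at hXmax
    by_cases hXZ : X ⊆ Z
    · left
      rw [hXmax.2 Z hZGm hXZ]
      exact hZS
    · right
      have hXF : X ∈ F := by
        rcases Finset.mem_union.1 hXmax.1 with h | h
        · exact h
        · exact absurd (Finset.mem_powerset.1 h) hXZ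
      have hXmaxF : X ∈ maximalSets F := by
        rw [maximalSets, Finset.mem_filter]
        exact ⟨hXF, fun Y hY hXY => hXmax.2 Y (Finset.mem_union_left _ hY) hXY⟩
      refine ⟨?_, ?_, ?_⟩
      · simp only [baseFam, Finset.mem_image, Finset.mem_filter]
        exact ⟨X, ⟨hXmaxF, hSX⟩, rfl⟩
      · intro h
        apply hXZ
        intro a ha
        by_cases haS : a ∈ S
        · exact hSsubZ haS
        · have h2 : a ∈ X \ S := Finset.mem_sdiff.2 ⟨ha, haS⟩
          rw [h, Finset.mem_singleton] at h2
          rw [h2]; exact hxZ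
      · intro h
        apply hXZ
        intro a ha
        by_cases haS : a ∈ S
        · exact hSsubZ haS
        · have h2 : a ∈ X \ S := Finset.mem_sdiff.2 ⟨ha, haS⟩
          rw [h, Finset.mem_singleton] at h2
          rw [h2]; exact hyZ
  -- base members of F other than {x}, {y} stay base members
  have hB'of : ∀ P ∈ baseFam F S, P ≠ {x} → P ≠ {y} → P ∈ baseFam Gm S := by
    intro P hPB hP1 hP2
    have hPB2 := hPB
    simp only [baseFam, Finset.mem_image, Finset.mem_filter] at hPB2
    obtain ⟨X, ⟨hXmax, hSX⟩, rfl⟩ := hPB2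
    have hXZ : ¬X ⊆ Z := by
      intro hXZ
      have hsub : X \ S ⊆ T := by
        rw [← hZS]; exact Finset.sdiff_subset_sdiff hXZ subset_rfl
      rw [hTdef] at hsub
      rcases eq_of_subset_pair hsub with h | h | h | h
      · exact (base_nonempty hPB).ne_empty h
      · exact hP1 h
      · exact hP2 h
      · rw [← hTdef] at h
        exact hTnotB (h ▸ hPB)
    simp only [baseFam, Finset.mem_image, Finset.mem_filter]
    exact ⟨X, ⟨hmax_pres X hXmax hXZ, hSX⟩, rfl⟩
  have hσB' : ∀ P ∈ baseFam F S, sigma' x y P ∈ baseFam Gm S := by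
    intro P hPB
    by_cases h : P = {x} ∨ P = {y}
    · have : sigma' x y P = T := by rw [sigma', if_pos h, hTdef]
      rw [this]; exact hTB'
    · push_neg at h
      rw [sigma'_eq h.1 h.2]
      exact hB'of P hPB h.1 h.2
  have hσsub : ∀ P : Finset A, P ⊆ sigma' x y P := fun P => subset_sigma'
  have hσlift : ∀ P Q : Finset A, ReflTransGen (brel F S) P Q →
      ReflTransGen (brel Gm S) (sigma' x y P) (sigma' x y Q) := by
    intro P Q h
    refine ReflTransGen.lift (p := brel Gm S) (sigma' x y) (fun a b (hab : brel F S a b) => ?_) _ _ h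
    exact ⟨hσB' a hab.1, hσB' b hab.2.1,
      hab.2.2.mono (Finset.inter_subset_inter (hσsub a) (hσsub b))⟩
  have hxUV : x ∈ component F S UV := by rw [← hVeq]; exact hxV
  obtain ⟨Px, ⟨hPxB, hrx⟩, hxPx⟩ := mem_component.1 hxUV
  have hyUW : y ∈ component F S UW := by rw [← hWeq]; exact hyW
  obtain ⟨Py, ⟨hPyB, hry⟩, hyPy⟩ := mem_component.1 hyUW
  have hstepx : ReflTransGen (brel Gm S) T (sigma' x y Px) :=
    ReflTransGen.single ⟨hTB', hσB' Px hPxB,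
      ⟨x, Finset.mem_inter.2 ⟨hxT, hσsub Px hxPx⟩⟩⟩
  have hstepy : ReflTransGen (brel Gm S) T (sigma' x y Py) :=
    ReflTransGen.single ⟨hTB', hσB' Py hPyB,
      ⟨y, Finset.mem_inter.2 ⟨hyT, hσsub Py hyPy⟩⟩⟩
  have hTV : ∀ P, ReflTransGen (brel F S) UV P →
      ReflTransGen (brel Gm S) T (sigma' x y P) := fun P h =>
    hstepx.trans ((reach_symm (hσlift UV Px hrx)).trans (hσlift UV P h))
  have hTW : ∀ P, ReflTransGen (brel F S) UW P →
      ReflTransGen (brel Gm S) T (sigma' x y P) := fun P h =>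
    hstepy.trans ((reach_symm (hσlift UW Py hry)).trans (hσlift UW P h))
  have hTVW : T ⊆ V ∪ W := by
    intro a ha
    rw [hTdef, Finset.mem_insert, Finset.mem_singleton] at ha
    rcases ha with rfl | rfl
    · exact Finset.mem_union_left _ hxV
    · exact Finset.mem_union_right _ hyW
  have hsubV : ∀ c ∈ baseFam F S, ∀ a, a ∈ c → a ∈ V → c ⊆ V := by
    intro c hcB a hac haV
    have haC : a ∈ component F S UV := by rw [← hVeq]; exact haV
    have hr := reach_of_inter_component hcB ⟨a, hac, haC⟩
    rw [hVeq]
    exact subset_component_of_reach hr hcB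
  have hsubW : ∀ c ∈ baseFam F S, ∀ a, a ∈ c → a ∈ W → c ⊆ W := by
    intro c hcB a hac haW
    have haC : a ∈ component F S UW := by rw [← hWeq]; exact haW
    have hr := reach_of_inter_component hcB ⟨a, hac, haC⟩
    rw [hWeq]
    exact subset_component_of_reach hr hcB
  -- everything reachable from T lies in V ∪ W
  have hC1 : ∀ Q, ReflTransGen (brel Gm S) T Q → Q ⊆ V ∪ W := by
    intro Q h
    induction h with
    | refl => exact hTVW
    | tail h1 hbc ih =>
      obtain ⟨a, hab⟩ := hbc.2.2
      rw [Finset.mem_inter] at hab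
      have haVW : a ∈ V ∪ W := ih hab.1
      rcases hB'char _ hbc.2.1 with rfl | ⟨hcB, _, _⟩
      · exact hTVW
      · rcases Finset.mem_union.1 haVW with haV | haW
        · exact (hsubV _ hcB a hab.2 haV).trans Finset.subset_union_left
        · exact (hsubW _ hcB a hab.2 haW).trans Finset.subset_union_right
  have hC2 : component Gm S T = V ∪ W := by
    apply Finset.Subset.antisymm
    · intro a ha
      obtain ⟨Q, ⟨_, hr⟩, haQ⟩ := mem_component.1 ha
      exact hC1 Q hr haQ
    · intro a ha
      rcases Finset.mem_union.1 ha with haV | haW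
      · have h1 : a ∈ component F S UV := by rw [← hVeq]; exact haV
        obtain ⟨P, ⟨hPB, hr⟩, haP⟩ := mem_component.1 h1
        exact mem_component.2 ⟨sigma' x y P, ⟨hσB' P hPB, hTV P hr⟩, hσsub P haP⟩
      · have h1 : a ∈ component F S UW := by rw [← hWeq]; exact haW
        obtain ⟨P, ⟨hPB, hr⟩, haP⟩ := mem_component.1 h1
        exact mem_component.2 ⟨sigma' x y P, ⟨hσB' P hPB, hTW P hr⟩, hσsub P haP⟩
  -- components away from V and W are unchanged
  have hC3 : ∀ P ∈ baseFam F S, component F S P ≠ V → component F S P ≠ W →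
      P ∈ baseFam Gm S ∧ component Gm S P = component F S P := by
    intro P hPB hCV hCW
    have hdisjV : ∀ a, a ∈ component F S P → a ∉ V := by
      intro a h hv
      have hv' : a ∈ component F S UV := by rw [← hVeq]; exact hv
      exact hCV ((component_eq_of_mem_inter h hv').trans hVeq.symm)
    have hdisjW : ∀ a, a ∈ component F S P → a ∉ W := by
      intro a h hw
      have hw' : a ∈ component F S UW := by rw [← hWeq]; exact hw
      exact hCW ((component_eq_of_mem_inter h hw').trans hWeq.symm)
    have hPsub : P ⊆ component F S P := subset_component_of_reach ReflTransGen.refl hPB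
    have hPx : P ≠ {x} := by
      rintro rfl
      exact hdisjV x (hPsub (Finset.mem_singleton_self x)) hxV
    have hPy : P ≠ {y} := by
      rintro rfl
      exact hdisjW y (hPsub (Finset.mem_singleton_self y)) hyW
    refine ⟨hB'of P hPB hPx hPy, ?_⟩
    apply Finset.Subset.antisymm
    · have key : ∀ Q, ReflTransGen (brel Gm S) P Q → Q ⊆ component F S P := by
        intro Q h
        induction h with
        | refl => exact hPsub
        | tail h1 hbc ih =>
          obtain ⟨a, hab⟩ := hbc.2.2
          rw [Finset.mem_inter] at hab
          have haC : a ∈ component F S P := ih hab.1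
          rcases hB'char _ hbc.2.1 with rfl | ⟨hcB, _, _⟩
          · exfalso
            have haT := hab.2
            rw [hTdef, Finset.mem_insert, Finset.mem_singleton] at haT
            rcases haT with rfl | rfl
            · exact hdisjV a haC hxV
            · exact hdisjW a haC hyW
          · have hr := reach_of_inter_component hcB ⟨a, hab.2, haC⟩
            exact subset_component_of_reach hr hcB
      intro a ha
      obtain ⟨Q, ⟨_, hr⟩, haQ⟩ := mem_component.1 ha
      exact key Q hr haQ
    · intro a ha
      obtain ⟨Q, ⟨hQB, hr⟩, haQ⟩ := mem_component.1 ha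
      have hQsub : Q ⊆ component F S P := subset_component_of_reach hr hQB
      have hQx : Q ≠ {x} := by
        rintro rfl
        exact hdisjV x (hQsub (Finset.mem_singleton_self x)) hxV
      have hQy : Q ≠ {y} := by
        rintro rfl
        exact hdisjW y (hQsub (Finset.mem_singleton_self y)) hyW
      have hlifted := hσlift P Q hr
      rw [sigma'_eq hPx hPy, sigma'_eq hQx hQy] at hlifted
      exact mem_component.2 ⟨Q, ⟨hB'of Q hQB hQx hQy, hlifted⟩, haQ⟩
  -- final set equality
  ext C
  simp only [reducedFamily, Set.mem_insert_iff, Set.mem_diff, Set.mem_singleton_iff,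
    Set.mem_setOf_eq]
  constructor
  · rintro ⟨P, hPB', rfl⟩
    rcases hB'char P hPB' with rfl | ⟨hPB, hPx, hPy⟩
    · exact Or.inl hC2
    · by_cases hCV : component F S P = V
      · left
        have hrVP : ReflTransGen (brel F S) UV P := by
          obtain ⟨a, haP⟩ := base_nonempty hPB
          refine reach_of_inter_component hPB ⟨a, haP, ?_⟩
          have h1 : a ∈ component F S P :=
            subset_component_of_reach ReflTransGen.refl hPB haP
          rw [hCV, hVeq] at h1
          exact h1
        have hr' := hTV P hrVP
        rw [sigma'_eq hPx hPy] at hr'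
        rw [← component_congr hr', hC2]
      · by_cases hCW : component F S P = W
        · left
          have hrWP : ReflTransGen (brel F S) UW P := by
            obtain ⟨a, haP⟩ := base_nonempty hPB
            refine reach_of_inter_component hPB ⟨a, haP, ?_⟩
            have h1 : a ∈ component F S P :=
              subset_component_of_reach ReflTransGen.refl hPB haP
            rw [hCW, hWeq] at h1
            exact h1
          have hr' := hTW P hrWP
          rw [sigma'_eq hPx hPy] at hr'
          rw [← component_congr hr', hC2]
        · obtain ⟨_, heq⟩ := hC3 P hPB hCV hCW
          refine Or.inr ⟨⟨P, hPB, heq⟩, ?_⟩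
          rw [heq]
          rintro (h | h)
          · exact hCV h
          · exact hCW h
  · rintro (rfl | ⟨⟨Q, hQB, rfl⟩, hne⟩)
    · exact ⟨T, hTB', hC2.symm⟩
    · push_neg at hne
      obtain ⟨hQB', heq⟩ := hC3 Q hQB hne.1 hne.2
      exact ⟨Q, hQB', heq.symm⟩
end
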